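/- arXiv:2012.09064 — 6 statements merged into one kernel-verified Lean document; each statement's English description precedes it below -/
import Mathlib

section
/- The map φ is Lipschitz-continuous on the unit simplex Δ^d: there exists a constant K > 0 such that for all m₁, m₂ ∈ Δ^d, ‖φ(m₁) − φ(m₂)‖ ≤ K·‖m₁ − m₂‖, where ‖·‖ is the sup-norm. In particular, φ is continuous on Δ^d (the affine pieces of φ agree on the boundaries between zones). -/
open Finset

lemma min_lip (a b c : ℝ) : |min a b - min a c| ≤ |b - c| := by
  rcases le_total a b with hab | hab <;> rcases le_total a c with hac | hac <;>
    simp [min_eq_left, min_eq_right, hab, hac] <;>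
    rw [abs_le] <;>
    constructor <;>
    nlinarith [le_abs_self (b - c), neg_abs_le (b - c), abs_nonneg (b - c)]

/-- The mean-field map `φ` of the synchronous restless bandit model is
Lipschitz-continuous on the unit simplex for the sup-norm: there is a constant `K > 0` with
`‖φ(m₁) − φ(m₂)‖ ≤ K ‖m₁ − m₂‖` for all `m₁, m₂ ∈ Δ^d` (in particular `φ` is continuous, the
affine pieces agreeing on the zone boundaries). The sup-norm is the norm of `Fin d → ℝ`. -/
theorem phi_lipschitz
    (d : ℕ) (hd : 1 ≤ d) (α : ℝ) (hα : α ∈ Set.Ioo (0 : ℝ) 1)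
    (P0 P1 : Matrix (Fin d) (Fin d) ℝ)
    (hP0nonneg : ∀ i j, 0 ≤ P0 i j) (hP0row : ∀ i, ∑ j, P0 i j = 1)
    (hP1nonneg : ∀ i j, 0 ≤ P1 i j) (hP1row : ∀ i, ∑ j, P1 i j = 1)
    (s : (Fin d → ℝ) → Fin d)
    (hs : ∀ m ∈ stdSimplex ℝ (Fin d),
      (∑ i ∈ univ.filter (· < s m), m i) ≤ α ∧ α < ∑ i ∈ univ.filter (· ≤ s m), m i)
    (φ : (Fin d → ℝ) → (Fin d → ℝ))
    (hφ : ∀ m ∈ stdSimplex ℝ (Fin d), ∀ j,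
      φ m j = (∑ i ∈ univ.filter (· < s m), m i * P1 i j)
        + (α - ∑ i ∈ univ.filter (· < s m), m i) * P1 (s m) j
        + ((∑ i ∈ univ.filter (· ≤ s m), m i) - α) * P0 (s m) j
        + ∑ i ∈ univ.filter (fun i => s m < i), m i * P0 i j) :
    ∃ K : ℝ, 0 < K ∧ ∀ m₁ ∈ stdSimplex ℝ (Fin d), ∀ m₂ ∈ stdSimplex ℝ (Fin d),
      ‖φ m₁ - φ m₂‖ ≤ K * ‖m₁ - m₂‖ := by
  classical
  set A : (Fin d → ℝ) → Fin d → ℝ := fun m i => ∑ k ∈ univ.filter (· ≤ i), m k with hAdef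
  set B : (Fin d → ℝ) → Fin d → ℝ := fun m i => ∑ k ∈ univ.filter (· < i), m k with hBdef
  set g : (Fin d → ℝ) → Fin d → ℝ := fun m i => min α (A m i) - min α (B m i) with hgdef
  -- A = m i + B
  have hAB : ∀ (m : Fin d → ℝ) i, A m i = m i + B m i := by
    intro m i
    have hset : univ.filter (· ≤ i) = insert i (univ.filter (· < i)) := by
      ext k
      simp [le_iff_lt_or_eq, or_comm]
    have hnot : i ∉ univ.filter (· < i) := by simp
    simp only [hAdef, hBdef, hset, Finset.sum_insert hnot]
  have hBA : ∀ (m : Fin d → ℝ), m ∈ stdSimplex ℝ (Fin d) → ∀ i, B m i ≤ A m i := by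
    intro m hm i
    apply Finset.sum_le_sum_of_subset_of_nonneg
    · intro k hk
      simp only [mem_filter, mem_univ, true_and] at hk ⊢
      exact le_of_lt hk
    · intro k _ _; exact hm.1 k
  -- key representation
  have hrep : ∀ m ∈ stdSimplex ℝ (Fin d), ∀ j,
      φ m j = (∑ i, m i * P0 i j) + ∑ i, g m i * (P1 i j - P0 i j) := by
    intro m hm j
    obtain ⟨hBs, hAs⟩ := hs m hm
    have hBs' : B m (s m) ≤ α := hBs
    have hAs' : α < A m (s m) := hAs
    have hAlt : ∀ i, i < s m → A m i ≤ α := by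
      intro i hi
      refine le_trans ?_ hBs'
      apply Finset.sum_le_sum_of_subset_of_nonneg
      · intro k hk
        simp only [mem_filter, mem_univ, true_and] at hk ⊢
        exact lt_of_le_of_lt hk hi
      · intro k _ _; exact hm.1 k
    have hBgt : ∀ i, s m < i → α ≤ B m i := by
      intro i hi
      refine le_trans (le_of_lt hAs') ?_
      apply Finset.sum_le_sum_of_subset_of_nonneg
      · intro k hk
        simp only [mem_filter, mem_univ, true_and] at hk ⊢
        exact lt_of_le_of_lt hk hi
      · intro k _ _; exact hm.1 k
    have hglt : ∀ i, i < s m → g m i = m i := by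
      intro i hi
      have h1 : min α (A m i) = A m i := min_eq_right (hAlt i hi)
      have h2 : min α (B m i) = B m i :=
        min_eq_right (le_trans (hBA m hm i) (hAlt i hi))
      simp only [hgdef]; rw [h1, h2, hAB m i]; ring
    have hgs : g m (s m) = α - B m (s m) := by
      have h1 : min α (A m (s m)) = α := min_eq_left (le_of_lt hAs')
      have h2 : min α (B m (s m)) = B m (s m) := min_eq_right hBs'
      simp only [hgdef]; rw [h1, h2]
    have hggt : ∀ i, s m < i → g m i = 0 := by
      intro i hi
      have h1 : min α (A m i) = α :=
        min_eq_left (le_trans (hBgt i hi) (hBA m hm i))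
      have h2 : min α (B m i) = α := min_eq_left (hBgt i hi)
      simp only [hgdef]; rw [h1, h2, sub_self]
    have S1 : ∑ i, g m i * P1 i j
        = (∑ i ∈ univ.filter (· < s m), m i * P1 i j) + (α - B m (s m)) * P1 (s m) j := by
      rw [← Finset.sum_filter_add_sum_filter_not univ (· < s m)]
      congr 1
      · exact Finset.sum_congr rfl fun i hi => by
          rw [hglt i (by simpa using hi)]
      · rw [Finset.sum_eq_single_of_mem (s m) (by simp)]
        · rw [hgs]
        · intro i hi hne
          simp only [mem_filter, mem_univ, true_and, not_lt] at hi
          rw [hggt i (lt_of_le_of_ne hi (Ne.symm hne)), zero_mul]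
    have S2 : ∑ i, (m i - g m i) * P0 i j
        = (A m (s m) - α) * P0 (s m) j + ∑ i ∈ univ.filter (fun i => s m < i), m i * P0 i j := by
      rw [← Finset.sum_filter_add_sum_filter_not univ (· ≤ s m)]
      congr 1
      · rw [Finset.sum_eq_single_of_mem (s m) (by simp)]
        · rw [hgs, hAB m (s m)]; ring
        · intro i hi hne
          simp only [mem_filter, mem_univ, true_and] at hi
          rw [hglt i (lt_of_le_of_ne hi hne), sub_self, zero_mul]
      · refine Finset.sum_congr ?_ fun i hi => by
          simp only [mem_filter, mem_univ, true_and, not_le] at hi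
          rw [hggt i hi, sub_zero]
        ext i; simp [not_le]
    have hsplit : (∑ i, m i * P0 i j) + ∑ i, g m i * (P1 i j - P0 i j)
        = (∑ i, g m i * P1 i j) + ∑ i, (m i - g m i) * P0 i j := by
      rw [← Finset.sum_add_distrib, ← Finset.sum_add_distrib]
      exact Finset.sum_congr rfl fun i _ => by ring
    rw [hφ m hm j, hsplit, S1, S2]
    ring
  -- the Lipschitz constant
  refine ⟨(d : ℝ) + 2 * d ^ 2, ?_, ?_⟩
  · have hd' : (0 : ℝ) < d := by exact_mod_cast hd
    positivity
  intro m₁ hm₁ m₂ hm₂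
  set Δ := ‖m₁ - m₂‖ with hΔdef
  have hΔ0 : 0 ≤ Δ := norm_nonneg _
  have hcoord : ∀ i, |m₁ i - m₂ i| ≤ Δ := by
    intro i
    have := norm_le_pi_norm (m₁ - m₂) i
    simpa [Real.norm_eq_abs] using this
  have hsum : ∀ F : Finset (Fin d), |(∑ k ∈ F, m₁ k) - ∑ k ∈ F, m₂ k| ≤ d * Δ := by
    intro F
    rw [← Finset.sum_sub_distrib]
    calc |∑ k ∈ F, (m₁ k - m₂ k)| ≤ ∑ k ∈ F, |m₁ k - m₂ k| := Finset.abs_sum_le_sum_abs _ _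
      _ ≤ ∑ k ∈ F, Δ := Finset.sum_le_sum fun k _ => hcoord k
      _ = F.card * Δ := by rw [Finset.sum_const, nsmul_eq_mul]
      _ ≤ d * Δ := by
          apply mul_le_mul_of_nonneg_right _ hΔ0
          exact_mod_cast (le_trans (Finset.card_le_card (Finset.subset_univ F))
            (by simp))
  have hgLip : ∀ i, |g m₁ i - g m₂ i| ≤ 2 * d * Δ := by
    intro i
    have h1 : |min α (A m₁ i) - min α (A m₂ i)| ≤ d * Δ :=
      le_trans (min_lip α _ _) (hsum _)
    have h2 : |min α (B m₁ i) - min α (B m₂ i)| ≤ d * Δ :=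
      le_trans (min_lip α _ _) (hsum _)
    calc |g m₁ i - g m₂ i|
        = |(min α (A m₁ i) - min α (A m₂ i)) - (min α (B m₁ i) - min α (B m₂ i))| := by
          simp only [hgdef]; ring_nf
      _ ≤ |min α (A m₁ i) - min α (A m₂ i)| + |min α (B m₁ i) - min α (B m₂ i)| :=
          abs_sub _ _
      _ ≤ d * Δ + d * Δ := add_le_add h1 h2
      _ = 2 * d * Δ := by ring
  have hPle1 : ∀ (P : Matrix (Fin d) (Fin d) ℝ), (∀ i j, 0 ≤ P i j) →
      (∀ i, ∑ j, P i j = 1) → ∀ i j, P i j ≤ 1 := by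
    intro P hnn hrow i j
    calc P i j ≤ ∑ k, P i k :=
        Finset.single_le_sum (fun k _ => hnn i k) (mem_univ j)
      _ = 1 := hrow i
  rw [pi_norm_le_iff_of_nonneg (by positivity)]
  intro j
  rw [Pi.sub_apply, Real.norm_eq_abs, hrep m₁ hm₁ j, hrep m₂ hm₂ j]
  have key : ((∑ i, m₁ i * P0 i j) + ∑ i, g m₁ i * (P1 i j - P0 i j))
      - ((∑ i, m₂ i * P0 i j) + ∑ i, g m₂ i * (P1 i j - P0 i j))
      = (∑ i, (m₁ i - m₂ i) * P0 i j) + ∑ i, (g m₁ i - g m₂ i) * (P1 i j - P0 i j) := by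
    simp only [sub_mul, Finset.sum_sub_distrib]
    ring
  have hP0abs : ∀ i, |P0 i j| ≤ 1 := fun i =>
    abs_le.2 ⟨by linarith [hP0nonneg i j], hPle1 P0 hP0nonneg hP0row i j⟩
  have hP10abs : ∀ i, |P1 i j - P0 i j| ≤ 1 := fun i =>
    abs_le.2 ⟨by linarith [hP1nonneg i j, hPle1 P0 hP0nonneg hP0row i j],
      by linarith [hP0nonneg i j, hPle1 P1 hP1nonneg hP1row i j]⟩
  calc |((∑ i, m₁ i * P0 i j) + ∑ i, g m₁ i * (P1 i j - P0 i j))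
      - ((∑ i, m₂ i * P0 i j) + ∑ i, g m₂ i * (P1 i j - P0 i j))|
      = |(∑ i, (m₁ i - m₂ i) * P0 i j) + ∑ i, (g m₁ i - g m₂ i) * (P1 i j - P0 i j)| := by
        rw [key]
    _ ≤ |∑ i, (m₁ i - m₂ i) * P0 i j| + |∑ i, (g m₁ i - g m₂ i) * (P1 i j - P0 i j)| :=
        abs_add_le _ _
    _ ≤ (∑ i, |(m₁ i - m₂ i) * P0 i j|) + ∑ i, |(g m₁ i - g m₂ i) * (P1 i j - P0 i j)| :=
        add_le_add (Finset.abs_sum_le_sum_abs _ _) (Finset.abs_sum_le_sum_abs _ _)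
    _ ≤ (∑ _i : Fin d, Δ * 1) + ∑ _i : Fin d, (2 * d * Δ) * 1 := by
        refine add_le_add (Finset.sum_le_sum fun i _ => ?_)
          (Finset.sum_le_sum fun i _ => ?_)
        · rw [abs_mul]
          exact mul_le_mul (hcoord i) (hP0abs i) (abs_nonneg _) hΔ0
        · rw [abs_mul]
          exact mul_le_mul (hgLip i) (hP10abs i) (abs_nonneg _)
            (by positivity)
    _ = ((d : ℝ) + 2 * d ^ 2) * Δ := by
        simp [Finset.sum_const, Finset.card_univ]
        ring
end

section
/- Let A and B be d×d row-stochastic matrices that coincide on every row except possibly row s, and let m⁰, m¹ ∈ Δ^d be stationary distributions, i.e. m⁰·A = m⁰ and m¹·B = m¹, with m⁰_s > 0 and m¹_s > 0. For θ ∈ [0,1], let C be the row-stochastic matrix equal to A on all rows except row s, whose s-th row is (1−θ)·A_s + θ·B_s. Set p := (1−θ)m¹_s / (θ m⁰_s + (1−θ) m¹_s). Then m^θ := p·m⁰ + (1−p)·m¹ belongs to Δ^d and satisfies m^θ·C = m^θ, i.e. m^θ is a stationary distribution of C. -/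
open Finset

/-- If `A`, `B` are row-stochastic matrices coinciding on every row except
possibly row `s`, `m⁰·A = m⁰` and `m¹·B = m¹` are stationary distributions with `m⁰_s > 0`,
`m¹_s > 0`, and `C` is the row-stochastic matrix equal to `A` except that its `s`-th row is
`(1−θ)A_s + θB_s`, then with `p = (1−θ)m¹_s / (θ m⁰_s + (1−θ)m¹_s)` the convex combination
`m^θ = p m⁰ + (1−p) m¹` lies in the simplex and is a stationary distribution of `C`. -/
theorem interpolated_stationary_distribution
    (d : ℕ) (s : Fin d) (A B : Matrix (Fin d) (Fin d) ℝ)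
    (hAnonneg : ∀ i j, 0 ≤ A i j) (hArow : ∀ i, ∑ j, A i j = 1)
    (hBnonneg : ∀ i j, 0 ≤ B i j) (hBrow : ∀ i, ∑ j, B i j = 1)
    (hAB : ∀ i, i ≠ s → A i = B i)
    (m0 m1 : Fin d → ℝ)
    (hm0 : m0 ∈ stdSimplex ℝ (Fin d)) (hm1 : m1 ∈ stdSimplex ℝ (Fin d))
    (hstat0 : Matrix.vecMul m0 A = m0) (hstat1 : Matrix.vecMul m1 B = m1)
    (hm0s : 0 < m0 s) (hm1s : 0 < m1 s)
    (θ : ℝ) (hθ : θ ∈ Set.Icc (0 : ℝ) 1)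
    (C : Matrix (Fin d) (Fin d) ℝ)
    (hC : ∀ i j, C i j = if i = s then (1 - θ) * A s j + θ * B s j else A i j)
    (p : ℝ) (hp : p = (1 - θ) * m1 s / (θ * m0 s + (1 - θ) * m1 s))
    (mθ : Fin d → ℝ) (hmθ : mθ = p • m0 + (1 - p) • m1) :
    mθ ∈ stdSimplex ℝ (Fin d) ∧ Matrix.vecMul mθ C = mθ := by
  obtain ⟨hθ0, hθ1⟩ := hθ
  set D := θ * m0 s + (1 - θ) * m1 s with hD
  have hDpos : 0 < D := by
    rw [hD]
    rcases eq_or_lt_of_le hθ0 with h | h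
    · nlinarith
    · nlinarith [mul_pos h hm0s, mul_nonneg (sub_nonneg.2 hθ1) hm1s.le]
  have hpD : p * D = (1 - θ) * m1 s := by
    rw [hp]; field_simp
  have h1pD : (1 - p) * D = θ * m0 s := by nlinarith [hpD]
  have hp0 : 0 ≤ p := by
    rw [hp]
    apply div_nonneg _ hDpos.le
    nlinarith
  have hp1 : p ≤ 1 := by nlinarith [h1pD]
  have hmθapp : ∀ i, mθ i = p * m0 i + (1 - p) * m1 i := by
    intro i; simp [hmθ]
  have hms : mθ s * D = m0 s * m1 s := by
    rw [hmθapp s]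
    linear_combination m0 s * hpD + m1 s * h1pD
  have c1 : mθ s * (1 - θ) = p * m0 s := by
    apply mul_right_cancel₀ (ne_of_gt hDpos)
    linear_combination (1 - θ) * hms - m0 s * hpD
  have c2 : mθ s * θ = (1 - p) * m1 s := by
    apply mul_right_cancel₀ (ne_of_gt hDpos)
    linear_combination θ * hms - m1 s * h1pD
  refine ⟨⟨fun i => ?_, ?_⟩, ?_⟩
  · rw [hmθapp i]
    have h0 := hm0.1 i; have h1 := hm1.1 i
    nlinarith
  · have : ∑ i, mθ i = ∑ i, (p * m0 i + (1 - p) * m1 i) := by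
      exact Finset.sum_congr rfl fun i _ => hmθapp i
    rw [this, Finset.sum_add_distrib, ← Finset.mul_sum, ← Finset.mul_sum,
      hm0.2, hm1.2]
    ring
  · funext j
    have hA0 : ∑ i, m0 i * A i j = m0 j := by
      have := congrFun hstat0 j
      simpa [Matrix.vecMul, dotProduct] using this
    have hB1 : ∑ i, m1 i * B i j = m1 j := by
      have := congrFun hstat1 j
      simpa [Matrix.vecMul, dotProduct] using this
    have key : ∀ i, mθ i * C i j = p * (m0 i * A i j) + (1 - p) * (m1 i * B i j) := by
      intro i
      rw [hC]
      by_cases hi : i = s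
      · rw [if_pos hi, hi]
        linear_combination A s j * c1 + B s j * c2
      · simp only [if_neg hi]
        rw [hmθapp i]
        have : A i j = B i j := by rw [hAB i hi]
        rw [this]; ring
    have : Matrix.vecMul mθ C j = ∑ i, mθ i * C i j := by
      simp [Matrix.vecMul, dotProduct]
    rw [this, Finset.sum_congr rfl fun i _ => key i, Finset.sum_add_distrib,
      ← Finset.mul_sum, ← Finset.mul_sum, hA0, hB1, hmθapp j]
end

section
/- Let φ : Δ^d → Δ^d be K-Lipschitz with respect to the sup-norm (K > 0) with iterates Φ_t, and let (M(t))_{t∈ℕ} be a sequence of Δ^d-valued random vectors on a common probability space. Fix t ∈ ℕ, δ > 0 and p ∈ [0,1], and assume that for every s ∈ {0,…,t}, P(‖M(s+1) − φ(M(s))‖ ≥ δ) ≤ p. Then P( ‖M(t+1) − Φ_{t+1}(M(0))‖ ≥ (1 + K + K² + … + K^t)·δ ) ≤ (t+1)·p. -/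
open Finset MeasureTheory

/-- Multi-step concentration: if `φ : Δ^d → Δ^d` is `K`-Lipschitz for the
sup-norm with iterates `Φ_t = φ^[t]`, and `(M(t))` is a sequence of simplex-valued random
vectors whose one-step errors satisfy `P(‖M(s+1) − φ(M(s))‖ ≥ δ) ≤ p` for all `s ≤ t`, then
`P(‖M(t+1) − Φ_{t+1}(M(0))‖ ≥ (1 + K + ⋯ + K^t) δ) ≤ (t+1) p`. -/
theorem multistep_concentration
    {Ω : Type} [MeasurableSpace Ω] (μ : Measure Ω) [IsProbabilityMeasure μ]
    (d : ℕ) (φ : (Fin d → ℝ) → (Fin d → ℝ)) (K : ℝ) (hK : 0 < K)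
    (hself : ∀ m ∈ stdSimplex ℝ (Fin d), φ m ∈ stdSimplex ℝ (Fin d))
    (hlip : ∀ m₁ ∈ stdSimplex ℝ (Fin d), ∀ m₂ ∈ stdSimplex ℝ (Fin d),
      ‖φ m₁ - φ m₂‖ ≤ K * ‖m₁ - m₂‖)
    (M : ℕ → Ω → (Fin d → ℝ)) (hMS : ∀ t ω, M t ω ∈ stdSimplex ℝ (Fin d))
    (t : ℕ) (δ : ℝ) (hδ : 0 < δ) (p : ℝ) (hp : p ∈ Set.Icc (0 : ℝ) 1)
    (hstep : ∀ s ≤ t,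
      μ {ω | δ ≤ ‖M (s + 1) ω - φ (M s ω)‖} ≤ ENNReal.ofReal p) :
    μ {ω | (∑ s ∈ Finset.range (t + 1), K ^ s) * δ ≤ ‖M (t + 1) ω - φ^[t + 1] (M 0 ω)‖}
      ≤ ENNReal.ofReal ((t + 1) * p) := by
  -- iterates stay in the simplex
  have hiter : ∀ (n : ℕ) (m), m ∈ stdSimplex ℝ (Fin d) → φ^[n] m ∈ stdSimplex ℝ (Fin d) := by
    intro n
    induction n with
    | zero => intro m hm; simpa using hm
    | succ n ih =>
      intro m hm
      rw [Function.iterate_succ_apply']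
      exact hself _ (ih m hm)
  -- deterministic lemma
  have key : ∀ (n : ℕ) (ω : Ω), n ≤ t →
      (∀ s ≤ n, ‖M (s + 1) ω - φ (M s ω)‖ < δ) →
      ‖M (n + 1) ω - φ^[n + 1] (M 0 ω)‖ < (∑ s ∈ Finset.range (n + 1), K ^ s) * δ := by
    intro n
    induction n with
    | zero =>
      intro ω _ h
      simpa using h 0 le_rfl
    | succ n ih =>
      intro ω hn h
      have h1 : ‖M (n + 2) ω - φ (M (n + 1) ω)‖ < δ := h (n + 1) le_rfl
      have h2 : ‖M (n + 1) ω - φ^[n + 1] (M 0 ω)‖ < (∑ s ∈ Finset.range (n + 1), K ^ s) * δ :=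
        ih ω (le_of_lt hn) (fun s hs => h s (le_trans hs (Nat.le_succ n)))
      have hphi : ‖φ (M (n + 1) ω) - φ (φ^[n + 1] (M 0 ω))‖
          ≤ K * ‖M (n + 1) ω - φ^[n + 1] (M 0 ω)‖ :=
        hlip _ (hMS _ _) _ (hiter _ _ (hMS 0 ω))
      have tri : ‖M (n + 2) ω - φ^[n + 2] (M 0 ω)‖
          ≤ ‖M (n + 2) ω - φ (M (n + 1) ω)‖ + ‖φ (M (n + 1) ω) - φ (φ^[n + 1] (M 0 ω))‖ := by
        have := norm_sub_le_norm_sub_add_norm_sub (M (n + 2) ω) (φ (M (n + 1) ω))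
          (φ^[n + 2] (M 0 ω))
        rw [Function.iterate_succ_apply'] at *
        exact this
      have hsum : (∑ s ∈ Finset.range (n + 2), K ^ s) * δ
          = δ + K * ((∑ s ∈ Finset.range (n + 1), K ^ s) * δ) := by
        rw [geom_sum_succ]
        ring
      calc ‖M (n + 2) ω - φ^[n + 2] (M 0 ω)‖
          ≤ ‖M (n + 2) ω - φ (M (n + 1) ω)‖ + ‖φ (M (n + 1) ω) - φ (φ^[n + 1] (M 0 ω))‖ := tri
        _ ≤ ‖M (n + 2) ω - φ (M (n + 1) ω)‖ + K * ‖M (n + 1) ω - φ^[n + 1] (M 0 ω)‖ := by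
            linarith
        _ < δ + K * ((∑ s ∈ Finset.range (n + 1), K ^ s) * δ) := by
            have := mul_lt_mul_of_pos_left h2 hK
            linarith
        _ = (∑ s ∈ Finset.range (n + 2), K ^ s) * δ := hsum.symm
  -- event inclusion
  have hsub : {ω | (∑ s ∈ Finset.range (t + 1), K ^ s) * δ ≤ ‖M (t + 1) ω - φ^[t + 1] (M 0 ω)‖}
      ⊆ ⋃ s ∈ Finset.range (t + 1), {ω | δ ≤ ‖M (s + 1) ω - φ (M s ω)‖} := by
    intro ω hω
    by_contra hc
    simp only [Set.mem_iUnion, Finset.mem_range, Set.mem_setOf_eq, not_exists, not_le] at hc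
    have : ‖M (t + 1) ω - φ^[t + 1] (M 0 ω)‖ < (∑ s ∈ Finset.range (t + 1), K ^ s) * δ :=
      key t ω le_rfl (fun s hs => hc s (Nat.lt_succ_of_le hs))
    exact absurd hω (not_le.mpr this)
  calc μ {ω | (∑ s ∈ Finset.range (t + 1), K ^ s) * δ ≤ ‖M (t + 1) ω - φ^[t + 1] (M 0 ω)‖}
      ≤ μ (⋃ s ∈ Finset.range (t + 1), {ω | δ ≤ ‖M (s + 1) ω - φ (M s ω)‖}) :=
        measure_mono hsub
    _ ≤ ∑ s ∈ Finset.range (t + 1), μ {ω | δ ≤ ‖M (s + 1) ω - φ (M s ω)‖} :=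
        measure_biUnion_finset_le _ _
    _ ≤ ∑ s ∈ Finset.range (t + 1), ENNReal.ofReal p := by
        exact Finset.sum_le_sum fun s hs => hstep s (Nat.lt_succ_iff.mp (Finset.mem_range.mp hs))
    _ = (t + 1) * ENNReal.ofReal p := by
        simp [Finset.sum_const, nsmul_eq_mul]
    _ = ENNReal.ofReal ((t + 1) * p) := by
        rw [ENNReal.ofReal_mul (by positivity)]
        congr 1
        rw [← ENNReal.ofReal_natCast, ← ENNReal.ofReal_one, ← ENNReal.ofReal_add (by norm_num) (by positivity)]
end

section
/- Let φ : Δ^d → Δ^d be Lipschitz with respect to the sup-norm, with iterates Φ_t and fixed point m* ∈ Δ^d. Assume there exist r > 0 and a d×d real matrix K such that φ(m) = (m − m*)·K + m* for all m ∈ Δ^d with ‖m − m*‖ < r, and assume m* is a uniform global attractor of Φ. Then there exist constants b₁, b₂ > 0 such that for all t ∈ ℕ and all m ∈ Δ^d, ‖Φ_t(m) − m*‖ ≤ b₁·e^{−b₂·t}·‖m − m*‖. -/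
set_option maxHeartbeats 1000000 in
/-- Exponential stability of a non-singular uniform global attractor: if
`φ : Δ^d → Δ^d` is Lipschitz for the sup-norm, coincides with the affine map
`m ↦ (m − m*)·K + m*` on a ball of radius `r` around its fixed point `m*`, and `m*` is a
uniform global attractor of the iterates `Φ_t = φ^[t]`, then there are `b₁, b₂ > 0` with
`‖Φ_t(m) − m*‖ ≤ b₁ e^{−b₂ t} ‖m − m*‖` for all `t ∈ ℕ` and `m ∈ Δ^d`. -/
theorem exponential_stability_of_attractor
    (d : ℕ) (φ : (Fin d → ℝ) → (Fin d → ℝ))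
    (L : ℝ) (hL : 0 < L)
    (hself : ∀ m ∈ stdSimplex ℝ (Fin d), φ m ∈ stdSimplex ℝ (Fin d))
    (hlip : ∀ m₁ ∈ stdSimplex ℝ (Fin d), ∀ m₂ ∈ stdSimplex ℝ (Fin d),
      ‖φ m₁ - φ m₂‖ ≤ L * ‖m₁ - m₂‖)
    (mstar : Fin d → ℝ) (hmstarS : mstar ∈ stdSimplex ℝ (Fin d))
    (hfix : φ mstar = mstar)
    (r : ℝ) (hr : 0 < r) (K : Matrix (Fin d) (Fin d) ℝ)
    (haff : ∀ m ∈ stdSimplex ℝ (Fin d), ‖m - mstar‖ < r →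
      φ m = Matrix.vecMul (m - mstar) K + mstar)
    (hattr : ∀ ε : ℝ, 0 < ε → ∃ T : ℕ, ∀ t ≥ T, ∀ m ∈ stdSimplex ℝ (Fin d),
      ‖φ^[t] m - mstar‖ ≤ ε) :
    ∃ b₁ b₂ : ℝ, 0 < b₁ ∧ 0 < b₂ ∧ ∀ t : ℕ, ∀ m ∈ stdSimplex ℝ (Fin d),
      ‖φ^[t] m - mstar‖ ≤ b₁ * Real.exp (-b₂ * t) * ‖m - mstar‖ := by
  classical
  set S := stdSimplex ℝ (Fin d) with hSdef
  set L' : ℝ := max L 1 with hL'def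
  have hL'1 : 1 ≤ L' := le_max_right _ _
  have hLL' : L ≤ L' := le_max_left _ _
  have hL'0 : 0 < L' := lt_of_lt_of_le one_pos hL'1
  -- iterates stay in simplex
  have hiter_mem : ∀ t, ∀ m ∈ S, φ^[t] m ∈ S := by
    intro t
    induction t with
    | zero => intro m hm; simpa using hm
    | succ t ih =>
      intro m hm; rw [Function.iterate_succ_apply']; exact hself _ (ih m hm)
  -- Lipschitz iterate bound
  have hiter_lip : ∀ t, ∀ m ∈ S, ‖φ^[t] m - mstar‖ ≤ L' ^ t * ‖m - mstar‖ := by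
    intro t
    induction t with
    | zero => intro m hm; simp
    | succ t ih =>
      intro m hm
      rw [Function.iterate_succ_apply']
      have h1 : ‖φ (φ^[t] m) - mstar‖ ≤ L * ‖φ^[t] m - mstar‖ := by
        calc ‖φ (φ^[t] m) - mstar‖ = ‖φ (φ^[t] m) - φ mstar‖ := by rw [hfix]
          _ ≤ L * ‖φ^[t] m - mstar‖ := hlip _ (hiter_mem t m hm) _ hmstarS
      have h2 := ih m hm
      have hnn : (0:ℝ) ≤ ‖φ^[t] m - mstar‖ := norm_nonneg _
      have hnn2 : (0:ℝ) ≤ ‖m - mstar‖ := norm_nonneg _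
      have hp : (0:ℝ) ≤ L' ^ t := le_of_lt (pow_pos hL'0 t)
      calc ‖φ (φ^[t] m) - mstar‖ ≤ L * ‖φ^[t] m - mstar‖ := h1
        _ ≤ L' * (L' ^ t * ‖m - mstar‖) := by nlinarith
        _ = L' ^ (t + 1) * ‖m - mstar‖ := by ring
  obtain ⟨T₀, hT₀⟩ := hattr (r / 2) (by positivity)
  set c : ℝ := r / (2 * L' ^ T₀) with hcdef
  have hpowpos : (0:ℝ) < L' ^ T₀ := pow_pos hL'0 _
  have hc0 : 0 < c := by positivity
  have hcr : c * L' ^ T₀ = r / 2 := by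
    rw [hcdef]; field_simp
  -- key: orbit of small perturbations is linear forever
  have hball : ∀ w : Fin d → ℝ, mstar + w ∈ S → ‖w‖ ≤ c →
      ∀ t, ‖φ^[t] (mstar + w) - mstar‖ ≤ r / 2 := by
    intro w hwS hwc t
    rcases le_or_gt T₀ t with h | h
    · exact hT₀ t h _ hwS
    · have h1 : ‖φ^[t] (mstar + w) - mstar‖ ≤ L' ^ t * ‖mstar + w - mstar‖ :=
        hiter_lip t _ hwS
      have h2 : mstar + w - mstar = w := by abel
      rw [h2] at h1
      have h3 : L' ^ t ≤ L' ^ T₀ := pow_le_pow_right₀ hL'1 (le_of_lt h)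
      calc ‖φ^[t] (mstar + w) - mstar‖ ≤ L' ^ t * ‖w‖ := h1
        _ ≤ L' ^ T₀ * c := by
            apply mul_le_mul h3 hwc (norm_nonneg _) (le_of_lt hpowpos)
        _ = r / 2 := by rw [mul_comm]; exact hcr
  have horbit : ∀ w : Fin d → ℝ, mstar + w ∈ S → ‖w‖ ≤ c →
      ∀ t, φ^[t] (mstar + w) = mstar + Matrix.vecMul w (K ^ t) := by
    intro w hwS hwc t
    induction t with
    | zero => simp [Matrix.vecMul_one]
    | succ t ih =>
      rw [Function.iterate_succ_apply', ih]
      have hmem : mstar + Matrix.vecMul w (K ^ t) ∈ S := by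
        rw [← ih]; exact hiter_mem t _ hwS
      have hnorm : ‖mstar + Matrix.vecMul w (K ^ t) - mstar‖ < r := by
        rw [← ih]
        exact lt_of_le_of_lt (hball w hwS hwc t) (by linarith)
      rw [haff _ hmem hnorm]
      have h2 : mstar + Matrix.vecMul w (K ^ t) - mstar = Matrix.vecMul w (K ^ t) := by
        abel
      rw [h2, Matrix.vecMul_vecMul, ← pow_succ]
      abel
  -- linear algebra: contraction of K^t on the span of (S - mstar)
  set D : Set (Fin d → ℝ) := (fun m => m - mstar) '' S with hDdef
  obtain ⟨bs, hbsub, hbspan, hbli⟩ := exists_linearIndependent ℝ D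
  haveI : Finite ↥bs := hbli.finite
  haveI : Fintype ↥bs := Fintype.ofFinite _
  set V := Submodule.span ℝ (Set.range (Subtype.val : ↥bs → (Fin d → ℝ))) with hVdef
  have hDV : ∀ w ∈ D, w ∈ V := by
    intro w hw
    rw [hVdef, Subtype.range_coe, hbspan]
    exact Submodule.subset_span hw
  set B : Module.Basis ↥bs ℝ ↥V := Module.Basis.span hbli with hBdef
  set C : ↥bs → ℝ := fun i => ‖LinearMap.toContinuousLinearMap (B.coord i)‖ with hCdef
  have hC0 : ∀ i, 0 ≤ C i := by
    intro i
    simp only [hCdef]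
    exact norm_nonneg (LinearMap.toContinuousLinearMap (B.coord i))
  set σ : ↥bs → ℝ := fun i => c / max c ‖(i : Fin d → ℝ)‖ with hσdef
  have hσpos : ∀ i, 0 < σ i := by
    intro i
    have hmax : (0:ℝ) < max c ‖(i : Fin d → ℝ)‖ := lt_of_lt_of_le hc0 (le_max_left _ _)
    rw [hσdef]
    exact div_pos hc0 hmax
  have hσle1 : ∀ i, σ i ≤ 1 := by
    intro i
    rw [hσdef]
    apply div_le_one_of_le₀ (le_max_left _ _) (le_of_lt (lt_of_lt_of_le hc0 (le_max_left _ _)))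
  have hσnorm : ∀ i, ‖σ i • (i : Fin d → ℝ)‖ ≤ c := by
    intro i
    rw [norm_smul, Real.norm_eq_abs, abs_of_pos (hσpos i)]
    have hmaxpos : 0 < max c ‖(i : Fin d → ℝ)‖ := lt_of_lt_of_le hc0 (le_max_left _ _)
    rw [hσdef]
    calc c / max c ‖(i : Fin d → ℝ)‖ * ‖(i : Fin d → ℝ)‖
        ≤ c / max c ‖(i : Fin d → ℝ)‖ * max c ‖(i : Fin d → ℝ)‖ := by
          apply mul_le_mul_of_nonneg_left (le_max_right _ _)
          positivity
      _ = c := by field_simp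
  -- scaled basis points lie in S
  have hσmem : ∀ i : ↥bs, mstar + σ i • (i : Fin d → ℝ) ∈ S := by
    intro i
    obtain ⟨mi, hmi, hmieq⟩ := hbsub i.2
    have := (convex_stdSimplex ℝ (Fin d)) hmstarS hmi
      (a := 1 - σ i) (b := σ i) (by linarith [hσle1 i]) (le_of_lt (hσpos i)) (by ring)
    have heq : mstar + σ i • (i : Fin d → ℝ) = (1 - σ i) • mstar + σ i • mi := by
      rw [← hmieq]
      module
    rw [heq]
    exact this
  set Sc : ℝ := ∑ i : ↥bs, C i * (σ i)⁻¹ with hScdef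
  have hSc0 : 0 ≤ Sc := by
    apply Finset.sum_nonneg
    intro i _
    exact mul_nonneg (hC0 i) (le_of_lt (inv_pos.mpr (hσpos i)))
  set ε : ℝ := 1 / (2 * (Sc + 1)) with hεdef
  have hε0 : 0 < ε := by positivity
  obtain ⟨T₁, hT₁⟩ := hattr ε hε0
  -- contraction of K^t on D
  have hKbound : ∀ t ≥ T₁, ∀ w ∈ D, ‖Matrix.vecMul w (K ^ t)‖ ≤ (1/2) * ‖w‖ := by
    intro t ht w hw
    have hwV : w ∈ V := hDV w hw
    set wv : ↥V := ⟨w, hwV⟩ with hwvdef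
    have hrep : w = ∑ i : ↥bs, B.repr wv i • (i : Fin d → ℝ) := by
      have h1 : (wv : Fin d → ℝ) = ∑ i : ↥bs, B.repr wv i • ((B i : ↥V) : Fin d → ℝ) := by
        conv_lhs => rw [← B.sum_repr wv]
        push_cast
        rfl
      have h2 : ∀ i : ↥bs, ((B i : ↥V) : Fin d → ℝ) = (i : Fin d → ℝ) := fun i =>
        congrArg Subtype.val (Module.Basis.span_apply hbli i)
      simp only [h2] at h1
      exact h1
    have hexp : Matrix.vecMul w (K ^ t)
        = ∑ i : ↥bs, B.repr wv i • Matrix.vecMul (i : Fin d → ℝ) (K ^ t) := by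
      conv_lhs => rw [hrep]
      rw [← Matrix.vecMulLinear_apply, map_sum]
      simp [Matrix.vecMulLinear_apply]
    have hcoord : ∀ i : ↥bs, |B.repr wv i| ≤ C i * ‖w‖ := by
      intro i
      have h1 : B.repr wv i = (LinearMap.toContinuousLinearMap (B.coord i)) wv := by
        simp [Module.Basis.coord_apply]
      rw [h1]
      have h2 := (LinearMap.toContinuousLinearMap (B.coord i)).le_opNorm wv
      have h3 : ‖wv‖ = ‖w‖ := rfl
      rw [h3] at h2
      exact h2
    have hbasis : ∀ i : ↥bs, ‖Matrix.vecMul (i : Fin d → ℝ) (K ^ t)‖ ≤ (σ i)⁻¹ * ε := by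
      intro i
      have horb := horbit (σ i • (i : Fin d → ℝ)) (hσmem i) (hσnorm i) t
      have hatt := hT₁ t ht _ (hσmem i)
      rw [horb] at hatt
      have h4 : mstar + Matrix.vecMul (σ i • (i : Fin d → ℝ)) (K ^ t) - mstar
          = Matrix.vecMul (σ i • (i : Fin d → ℝ)) (K ^ t) := by abel
      rw [h4] at hatt
      rw [show Matrix.vecMul (σ i • (i : Fin d → ℝ)) (K ^ t)
          = σ i • Matrix.vecMul (i : Fin d → ℝ) (K ^ t) by
            rw [← Matrix.vecMulLinear_apply, ← Matrix.vecMulLinear_apply, map_smul],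
        norm_smul, Real.norm_eq_abs, abs_of_pos (hσpos i)] at hatt
      rw [← mul_le_mul_iff_right₀ (hσpos i)]
      calc σ i * ‖Matrix.vecMul (i : Fin d → ℝ) (K ^ t)‖ ≤ ε := hatt
        _ = σ i * ((σ i)⁻¹ * ε) := by rw [← mul_assoc, mul_inv_cancel₀ (hσpos i).ne', one_mul]
    calc ‖Matrix.vecMul w (K ^ t)‖
        = ‖∑ i : ↥bs, B.repr wv i • Matrix.vecMul (i : Fin d → ℝ) (K ^ t)‖ := by rw [hexp]
      _ ≤ ∑ i : ↥bs, ‖B.repr wv i • Matrix.vecMul (i : Fin d → ℝ) (K ^ t)‖ :=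
          norm_sum_le _ _
      _ ≤ ∑ i : ↥bs, (C i * ‖w‖) * ((σ i)⁻¹ * ε) := by
          apply Finset.sum_le_sum
          intro i _
          rw [norm_smul, Real.norm_eq_abs]
          exact mul_le_mul (hcoord i) (hbasis i) (norm_nonneg _)
            (mul_nonneg (hC0 i) (norm_nonneg _))
      _ = (Sc * ε) * ‖w‖ := by
          rw [hScdef, Finset.sum_mul, Finset.sum_mul]
          apply Finset.sum_congr rfl
          intro i _
          ring
      _ ≤ (1/2) * ‖w‖ := by
          apply mul_le_mul_of_nonneg_right _ (norm_nonneg _)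
          rw [hεdef, mul_one_div, div_le_iff₀ (by positivity : (0:ℝ) < 2 * (Sc + 1))]
          nlinarith
  -- global one-step contraction after N iterations
  obtain ⟨T₂, hT₂⟩ := hattr (c / 2) (by positivity)
  set N : ℕ := max (max T₁ T₂) 1 with hNdef
  have hN1 : 1 ≤ N := le_max_right _ _
  have hNT₁ : T₁ ≤ N := le_trans (le_max_left _ _) (le_max_left _ _)
  have hNT₂ : T₂ ≤ N := le_trans (le_max_right _ _) (le_max_left _ _)
  have hcontr : ∀ m ∈ S, ‖φ^[N] m - mstar‖ ≤ (1/2) * ‖m - mstar‖ := by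
    intro m hm
    rcases le_or_gt ‖m - mstar‖ c with hclose | hfar
    · have hmeq : mstar + (m - mstar) = m := by abel
      have horb := horbit (m - mstar) (by rw [hmeq]; exact hm) hclose N
      rw [hmeq] at horb
      rw [horb]
      have h4 : mstar + Matrix.vecMul (m - mstar) (K ^ N) - mstar
          = Matrix.vecMul (m - mstar) (K ^ N) := by abel
      rw [h4]
      exact hKbound N hNT₁ _ ⟨m, hm, rfl⟩
    · calc ‖φ^[N] m - mstar‖ ≤ c / 2 := hT₂ N hNT₂ m hm
        _ ≤ (1/2) * ‖m - mstar‖ := by linarith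
  -- iterate the contraction
  have hiterN : ∀ k : ℕ, ∀ m ∈ S, ‖φ^[N * k] m - mstar‖ ≤ (1/2) ^ k * ‖m - mstar‖ := by
    intro k
    induction k with
    | zero => intro m hm; simp
    | succ k ih =>
      intro m hm
      have heq : N * (k + 1) = N + N * k := by ring
      rw [heq, Function.iterate_add_apply]
      calc ‖φ^[N] (φ^[N * k] m) - mstar‖ ≤ (1/2) * ‖φ^[N * k] m - mstar‖ :=
          hcontr _ (hiter_mem _ m hm)
        _ ≤ (1/2) * ((1/2) ^ k * ‖m - mstar‖) := by
            have := ih m hm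
            linarith
        _ = (1/2) ^ (k + 1) * ‖m - mstar‖ := by ring
  -- assemble the exponential bound
  refine ⟨2 * L' ^ N, Real.log 2 / N, mul_pos two_pos (pow_pos hL'0 N), ?_, ?_⟩
  · apply div_pos (Real.log_pos (by norm_num))
    exact_mod_cast Nat.lt_of_lt_of_le Nat.zero_lt_one hN1
  intro t m hm
  set k := t / N with hkdef
  set s := t % N with hsdef
  have hNpos : 0 < N := hN1
  have hts : s + N * k = t := Nat.mod_add_div t N
  have hsN : s < N := Nat.mod_lt t hNpos
  have hsplit : φ^[t] m = φ^[s] (φ^[N * k] m) := by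
    rw [← hts, Function.iterate_add_apply]
  have h1 : ‖φ^[t] m - mstar‖ ≤ L' ^ s * ‖φ^[N * k] m - mstar‖ := by
    rw [hsplit]
    exact hiter_lip s _ (hiter_mem _ m hm)
  have h2 : ‖φ^[N * k] m - mstar‖ ≤ (1/2) ^ k * ‖m - mstar‖ := hiterN k m hm
  have h3 : L' ^ s ≤ L' ^ N := pow_le_pow_right₀ hL'1 (le_of_lt hsN)
  have hLsnn : (0:ℝ) ≤ L' ^ s := le_of_lt (pow_pos hL'0 _)
  have hLNnn : (0:ℝ) < L' ^ N := pow_pos hL'0 _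
  have h4 : ‖φ^[t] m - mstar‖ ≤ L' ^ N * ((1/2) ^ k * ‖m - mstar‖) := by
    calc ‖φ^[t] m - mstar‖ ≤ L' ^ s * ‖φ^[N * k] m - mstar‖ := h1
      _ ≤ L' ^ N * ((1/2) ^ k * ‖m - mstar‖) := by
          apply mul_le_mul h3 h2 (norm_nonneg _) (le_of_lt hLNnn)
  -- (1/2)^k ≤ 2 * exp(-(log 2 / N) * t)
  have hlog2 : 0 < Real.log 2 := Real.log_pos (by norm_num)
  have hNr : (0:ℝ) < (N:ℝ) := by exact_mod_cast hNpos
  have hkey : ((1:ℝ)/2) ^ k ≤ 2 * Real.exp (-(Real.log 2 / N) * t) := by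
    have hhalf : ((1:ℝ)/2) ^ k = Real.exp (-(k * Real.log 2)) := by
      rw [Real.exp_neg, Real.exp_nat_mul, Real.exp_log (by norm_num : (0:ℝ) < 2),
        one_div, inv_pow]
    rw [hhalf]
    have htN : (t:ℝ) ≤ (N:ℝ) * (k + 1) := by
      have h5 : t < N * (k + 1) := by
        calc t = s + N * k := hts.symm
          _ < N + N * k := Nat.add_lt_add_right hsN _
          _ = N * (k + 1) := by ring
      exact_mod_cast le_of_lt h5
    have hexp : -(Real.log 2 / N) * t ≥ -((k:ℝ) + 1) * Real.log 2 := by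
      rw [ge_iff_le, neg_mul, neg_mul, neg_le_neg_iff]
      rw [div_mul_eq_mul_div, div_le_iff₀ hNr]
      calc Real.log 2 * t ≤ Real.log 2 * ((N:ℝ) * (k+1)) := by
            apply mul_le_mul_of_nonneg_left htN (le_of_lt hlog2)
        _ = ((k:ℝ)+1) * Real.log 2 * N := by ring
    have h6 : Real.exp (-((k:ℝ) * Real.log 2))
        = Real.exp (Real.log 2) * Real.exp (-((k:ℝ) + 1) * Real.log 2) := by
      rw [← Real.exp_add]; congr 1; ring
    calc Real.exp (-((k:ℝ) * Real.log 2))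
        = 2 * Real.exp (-((k:ℝ) + 1) * Real.log 2) := by
          rw [h6, Real.exp_log (by norm_num : (0:ℝ) < 2)]
      _ ≤ 2 * Real.exp (-(Real.log 2 / N) * t) := by
          apply mul_le_mul_of_nonneg_left (Real.exp_le_exp.mpr hexp) (by norm_num)
  calc ‖φ^[t] m - mstar‖ ≤ L' ^ N * ((1/2) ^ k * ‖m - mstar‖) := h4
    _ ≤ L' ^ N * ((2 * Real.exp (-(Real.log 2 / N) * t)) * ‖m - mstar‖) := by
        apply mul_le_mul_of_nonneg_left _ (le_of_lt hLNnn)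
        apply mul_le_mul_of_nonneg_right hkey (norm_nonneg _)
    _ = 2 * L' ^ N * Real.exp (-(Real.log 2 / N) * t) * ‖m - mstar‖ := by ring
end

section
/- Let φ : Δ^d → Δ^d be Lipschitz with respect to the sup-norm, with iterates Φ_t and fixed point m* that is a uniform global attractor, and assume there exist r₀ > 0 and a d×d real matrix K such that φ(m) = (m − m*)·K + m* for all m ∈ Δ^d with ‖m − m*‖ < r₀ (m* is non-singular). Let N > 0 and let (M(t))_{t∈ℕ} be a sequence of Δ^d-valued random vectors such that: all M(t) have the same distribution; E[M(t+1) | M(t)] = φ(M(t)) almost surely for all t; and for all t and all δ > 0, P(‖M(t+1) − φ(M(t))‖ ≥ δ | M(t)) ≤ e^{−2Nδ²} almost surely. Then there exist constants b, c > 0, depending only on φ, m*, r₀ and the Lipschitz constant (and not on N), such that ‖E[M(0)] − m*‖ ≤ b·e^{−cN}. -/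
open MeasureTheory

set_option maxHeartbeats 2000000

private lemma inj_bound' {d : ℕ} (V : Submodule ℝ (Fin d → ℝ))
    (f : (Fin d → ℝ) →ₗ[ℝ] (Fin d → ℝ))
    (hinj : ∀ x ∈ V, f x = 0 → x = 0) :
    ∃ C : ℝ, 0 < C ∧ ∀ x ∈ V, ‖x‖ ≤ C * ‖f x‖ := by
  set g : V →ₗ[ℝ] (Fin d → ℝ) := f.comp V.subtype with hgdef
  have hg : Function.Injective g := by
    intro a b hab
    have h0 : f ((a : Fin d → ℝ) - b) = 0 := by
      simp only [map_sub]
      simpa [hgdef, LinearMap.comp_apply] using sub_eq_zero_of_eq hab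
    exact Subtype.ext (sub_eq_zero.mp (hinj _ (V.sub_mem a.2 b.2) h0))
  let e : V ≃ₗ[ℝ] LinearMap.range g := LinearEquiv.ofInjective g hg
  let e' := e.toContinuousLinearEquiv
  obtain ⟨Knn, ha⟩ : ∃ Kc, AntilipschitzWith Kc e' := ⟨_, e'.antilipschitz⟩
  refine ⟨(Knn : ℝ) + 1, by positivity, ?_⟩
  intro x hx
  have h1 := ha.le_mul_dist ⟨x, hx⟩ 0
  rw [dist_zero_right, map_zero, dist_zero_right] at h1
  have hcoe : ((e' (⟨x, hx⟩ : V) : LinearMap.range g) : Fin d → ℝ) = f x := by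
    simp only [e', LinearEquiv.coe_toContinuousLinearEquiv']
    rw [show (e (⟨x, hx⟩ : V) : Fin d → ℝ) = g ⟨x, hx⟩ from
      LinearEquiv.ofInjective_apply g ⟨x, hx⟩]; rfl
  have h2 : ‖e' (⟨x, hx⟩ : V)‖ = ‖f x‖ := by
    rw [show ‖e' (⟨x, hx⟩ : V)‖ = ‖((e' (⟨x, hx⟩ : V) : LinearMap.range g) : Fin d → ℝ)‖ from rfl,
      hcoe]
  have h3 : ‖(⟨x, hx⟩ : V)‖ = ‖x‖ := rfl
  rw [h2, h3] at h1
  have : (0:ℝ) ≤ ‖f x‖ := norm_nonneg _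
  nlinarith

/-- (Theorem C.1(i) of the paper.) Let `φ : Δ^d → Δ^d` be Lipschitz for the
sup-norm, with fixed point `m*` that is a uniform global attractor and around which `φ` is
affine (non-singularity). Then there are constants `b, c > 0`, depending only on `φ`, `m*`,
`r₀` and the Lipschitz constant — in particular not on `N` — such that for every `N > 0` and
every identically distributed simplex-valued process `(M(t))` with one-step conditional mean
`E[M(t+1) | M(t)] = φ(M(t))` a.s. and conditional Hoeffding tail
`P(‖M(t+1) − φ(M(t))‖ ≥ δ | M(t)) ≤ e^{−2Nδ²}` a.s., one has
`‖E[M(0)] − m*‖ ≤ b e^{−cN}`. -/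
theorem stationary_mean_exponentially_close
    (d : ℕ) (φ : (Fin d → ℝ) → (Fin d → ℝ))
    (L : ℝ) (hL : 0 < L)
    (hself : ∀ m ∈ stdSimplex ℝ (Fin d), φ m ∈ stdSimplex ℝ (Fin d))
    (hlip : ∀ m₁ ∈ stdSimplex ℝ (Fin d), ∀ m₂ ∈ stdSimplex ℝ (Fin d),
      ‖φ m₁ - φ m₂‖ ≤ L * ‖m₁ - m₂‖)
    (mstar : Fin d → ℝ) (hmstarS : mstar ∈ stdSimplex ℝ (Fin d))
    (hfix : φ mstar = mstar)
    (hattr : ∀ ε : ℝ, 0 < ε → ∃ T : ℕ, ∀ t ≥ T, ∀ m ∈ stdSimplex ℝ (Fin d),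
      ‖φ^[t] m - mstar‖ ≤ ε)
    (r₀ : ℝ) (hr₀ : 0 < r₀) (K : Matrix (Fin d) (Fin d) ℝ)
    (haff : ∀ m ∈ stdSimplex ℝ (Fin d), ‖m - mstar‖ < r₀ →
      φ m = Matrix.vecMul (m - mstar) K + mstar) :
    ∃ b c : ℝ, 0 < b ∧ 0 < c ∧
      ∀ (N : ℝ), 0 < N →
      ∀ (Ω : Type) (_ : MeasurableSpace Ω) (μ : Measure Ω), IsProbabilityMeasure μ →
      ∀ (M : ℕ → Ω → (Fin d → ℝ)),
        (∀ t, Measurable (M t)) →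
        (∀ t ω, M t ω ∈ stdSimplex ℝ (Fin d)) →
        (∀ t, Measure.map (M t) μ = Measure.map (M 0) μ) →
        (∀ t, μ[M (t + 1) | MeasurableSpace.comap (M t) inferInstance]
            =ᵐ[μ] fun ω => φ (M t ω)) →
        (∀ t : ℕ, ∀ δ : ℝ, 0 < δ → ∀ᵐ ω ∂μ,
          (μ[Set.indicator {ω' | δ ≤ ‖M (t + 1) ω' - φ (M t ω')‖} (fun _ => (1 : ℝ))
              | MeasurableSpace.comap (M t) inferInstance]) ω
            ≤ Real.exp (-2 * N * δ ^ 2)) →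
        ‖(∫ ω, M 0 ω ∂μ) - mstar‖ ≤ b * Real.exp (-c * N) := by
  classical
  -- ### Deterministic preliminaries
  have hL' : (1:ℝ) ≤ max L 1 := le_max_right _ _
  have hLL' : L ≤ max L 1 := le_max_left _ _
  set L' : ℝ := max L 1 with hL'def
  have hL'pow : ∀ s : ℕ, (1:ℝ) ≤ L' ^ s := fun s => one_le_pow₀ hL'
  have hiter : ∀ t, ∀ m ∈ stdSimplex ℝ (Fin d), φ^[t] m ∈ stdSimplex ℝ (Fin d) := by
    intro t
    induction t with
    | zero => intro m hm; simpa using hm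
    | succ n ih =>
      intro m hm
      rw [Function.iterate_succ_apply']
      exact hself _ (ih m hm)
  have hiterlip : ∀ t, ∀ m ∈ stdSimplex ℝ (Fin d), ‖φ^[t] m - mstar‖ ≤ L' ^ t * ‖m - mstar‖ := by
    intro t
    induction t with
    | zero => intro m hm; simp
    | succ n ih =>
      intro m hm
      rw [Function.iterate_succ_apply']
      calc ‖φ (φ^[n] m) - mstar‖ = ‖φ (φ^[n] m) - φ mstar‖ := by rw [hfix]
        _ ≤ L * ‖φ^[n] m - mstar‖ := hlip _ (hiter n m hm) _ hmstarS
        _ ≤ L' * (L' ^ n * ‖m - mstar‖) := by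
            apply mul_le_mul hLL' (ih m hm) (norm_nonneg _) (by linarith)
        _ = L' ^ (n+1) * ‖m - mstar‖ := by ring
  have hdiff1 : ∀ m ∈ stdSimplex ℝ (Fin d), ∀ m' ∈ stdSimplex ℝ (Fin d), ‖m - m'‖ ≤ 1 := by
    intro m hm m' hm'
    rw [pi_norm_le_iff_of_nonneg zero_le_one]
    intro i
    have h1 : m i ≤ 1 := by
      have := Finset.single_le_sum (fun j _ => hm.1 j) (Finset.mem_univ i)
      rw [hm.2] at this; exact this
    have h2 : m' i ≤ 1 := by
      have := Finset.single_le_sum (fun j _ => hm'.1 j) (Finset.mem_univ i)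
      rw [hm'.2] at this; exact this
    have h3 := hm.1 i
    have h4 := hm'.1 i
    simp only [Pi.sub_apply, Real.norm_eq_abs]
    rw [abs_le]; constructor <;> linarith
  -- staying near the fixed point, and the linearization of the iterates
  obtain ⟨T₀, hT₀⟩ := hattr (r₀/2) (by positivity)
  set r₁ : ℝ := r₀ / (2 * L' ^ T₀) with hr₁def
  have hr₁pos : 0 < r₁ := by
    have := hL'pow T₀; apply div_pos hr₀; nlinarith
  have hball : ∀ m ∈ stdSimplex ℝ (Fin d), ‖m - mstar‖ ≤ r₁ → ∀ s,
      ‖φ^[s] m - mstar‖ ≤ r₀/2 := by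
    intro m hm hmr s
    rcases le_or_gt T₀ s with hs | hs
    · exact hT₀ s hs m hm
    · calc ‖φ^[s] m - mstar‖ ≤ L' ^ s * ‖m - mstar‖ := hiterlip s m hm
        _ ≤ L' ^ T₀ * r₁ := by
            apply mul_le_mul _ hmr (norm_nonneg _) (by positivity)
            exact pow_le_pow_right₀ (by linarith) hs.le
        _ = r₀ / 2 := by
            rw [hr₁def]; field_simp
  have haffiter : ∀ m ∈ stdSimplex ℝ (Fin d), ‖m - mstar‖ ≤ r₁ →
      ∀ s, φ^[s] m - mstar = Matrix.vecMul (m - mstar) (K ^ s) := by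
    intro m hm hmr s
    induction s with
    | zero => simp [Matrix.vecMul_one]
    | succ n ih =>
      rw [Function.iterate_succ_apply',
        haff _ (hiter n m hm) (lt_of_le_of_lt (hball m hm hmr n) (by linarith)),
        add_sub_cancel_right, ih, Matrix.vecMul_vecMul, ← pow_succ]
  -- ### Injectivity of `x ↦ x - x K` on the zero-sum subspace
  have hinjV : ∀ x : Fin d → ℝ, (∑ i, x i) = 0 → x - Matrix.vecMul x K = 0 → x = 0 := by
    intro x hxsum hx0
    have hxK : Matrix.vecMul x K = x := (sub_eq_zero.mp hx0).symm
    have hxKn : ∀ n : ℕ, Matrix.vecMul x (K ^ n) = x := by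
      intro n
      induction n with
      | zero => simp [Matrix.vecMul_one]
      | succ n ih => rw [pow_succ, ← Matrix.vecMul_vecMul, ih, hxK]
    set t₀ : ℝ := min r₁ 1 with ht₀def
    have ht₀pos : 0 < t₀ := lt_min hr₁pos one_pos
    have ht₀le1 : t₀ ≤ 1 := min_le_right _ _
    have ht₀ler₁ : t₀ ≤ r₁ := min_le_left _ _
    set ej : Fin d → (Fin d → ℝ) := fun j => Pi.single j 1 with hejdef
    have hejS : ∀ j, ej j ∈ stdSimplex ℝ (Fin d) := by
      intro j
      constructor
      · intro i
        rcases eq_or_ne i j with h | h <;> simp [hejdef, Pi.single_apply, h]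
      · simp [hejdef]
    set mj : Fin d → (Fin d → ℝ) := fun j => mstar + t₀ • (ej j - mstar) with hmjdef
    have hmjS : ∀ j, mj j ∈ stdSimplex ℝ (Fin d) := by
      intro j
      have := (convex_stdSimplex ℝ (Fin d)) hmstarS (hejS j)
        (by linarith : (0:ℝ) ≤ 1 - t₀) ht₀pos.le (by ring)
      convert this using 1
      funext i
      simp [hmjdef]
      ring
    have hmjr : ∀ j, ‖mj j - mstar‖ ≤ r₁ := by
      intro j
      have : mj j - mstar = t₀ • (ej j - mstar) := by simp [hmjdef]
      rw [this, norm_smul, Real.norm_eq_abs, abs_of_pos ht₀pos]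
      calc t₀ * ‖ej j - mstar‖ ≤ t₀ * 1 := by
            apply mul_le_mul_of_nonneg_left (hdiff1 _ (hejS j) _ hmstarS) ht₀pos.le
        _ ≤ r₁ := by linarith
    have hdecomp : x = ∑ j, x j • (ej j - mstar) := by
      funext i
      rw [Finset.sum_apply]
      have : ∀ j, (x j • (ej j - mstar)) i = x j * (ej j) i - x j * mstar i := by
        intro j; simp [mul_sub]
      simp only [this, Finset.sum_sub_distrib, ← Finset.sum_mul]
      rw [hxsum]
      simp [hejdef, Pi.single_apply]
    have hxn : ∀ n : ℕ, x = ∑ j, (x j / t₀) • (φ^[n] (mj j) - mstar) := by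
      intro n
      have h1 : ∀ j, φ^[n] (mj j) - mstar = t₀ • Matrix.vecMul (ej j - mstar) (K ^ n) := by
        intro j
        rw [haffiter _ (hmjS j) (hmjr j) n]
        have : mj j - mstar = t₀ • (ej j - mstar) := by simp [hmjdef]
        rw [this]
        exact (Matrix.vecMulLinear (K ^ n)).map_smul t₀ _
      calc x = Matrix.vecMul x (K ^ n) := (hxKn n).symm
        _ = ∑ j, x j • Matrix.vecMul (ej j - mstar) (K ^ n) := by
            conv_lhs => rw [hdecomp]
            rw [show Matrix.vecMul (∑ j, x j • (ej j - mstar)) (K ^ n)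
              = (Matrix.vecMulLinear (K ^ n)) (∑ j, x j • (ej j - mstar)) from rfl, map_sum]
            congr 1; funext j
            rw [(Matrix.vecMulLinear (K ^ n)).map_smul]
            rfl
        _ = ∑ j, (x j / t₀) • (φ^[n] (mj j) - mstar) := by
            congr 1; funext j
            rw [h1 j, smul_smul]
            congr 1
            field_simp
    have hxsmall : ∀ ε : ℝ, 0 < ε → ‖x‖ ≤ (∑ j, |x j|) / t₀ * ε := by
      intro ε hε
      obtain ⟨T, hT⟩ := hattr ε hε
      conv_lhs => rw [hxn T]
      calc ‖∑ j, (x j / t₀) • (φ^[T] (mj j) - mstar)‖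
          ≤ ∑ j, ‖(x j / t₀) • (φ^[T] (mj j) - mstar)‖ := norm_sum_le _ _
        _ ≤ ∑ j, |x j| / t₀ * ε := by
            apply Finset.sum_le_sum
            intro j _
            rw [norm_smul, Real.norm_eq_abs, abs_div, abs_of_pos ht₀pos]
            apply mul_le_mul_of_nonneg_left (hT T le_rfl _ (hmjS j)) (by positivity)
        _ = (∑ j, |x j|) / t₀ * ε := by rw [← Finset.sum_mul, ← Finset.sum_div]
    by_contra hxne
    have hxpos : 0 < ‖x‖ := norm_pos_iff.mpr hxne
    set S : ℝ := (∑ j, |x j|) / t₀ with hSdef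
    have hS : (0:ℝ) ≤ S := by positivity
    have h1 := hxsmall (‖x‖ / (2 * (S + 1))) (by positivity)
    have h4 : S * (‖x‖ / (2 * (S + 1))) * (2 * (S + 1)) = S * ‖x‖ := by
      field_simp
    have h3 := mul_le_mul_of_nonneg_right h1 (by positivity : (0:ℝ) ≤ 2 * (S + 1))
    rw [h4] at h3
    nlinarith
  -- ### The constant from the injectivity
  set Sl : (Fin d → ℝ) →ₗ[ℝ] ℝ := ∑ i, LinearMap.proj i with hSldef
  have hSlapp : ∀ y : Fin d → ℝ, Sl y = ∑ i, y i := by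
    intro y; simp [hSldef, LinearMap.sum_apply]
  set fIK : (Fin d → ℝ) →ₗ[ℝ] (Fin d → ℝ) := LinearMap.id - Matrix.vecMulLinear K with hfIKdef
  have hfIKapp : ∀ y : Fin d → ℝ, fIK y = y - Matrix.vecMul y K := by
    intro y
    simp only [hfIKdef, LinearMap.sub_apply, LinearMap.id_apply]
    rfl
  obtain ⟨C, hCpos, hC⟩ := inj_bound' (LinearMap.ker Sl) fIK (by
    intro y hy hy0
    rw [LinearMap.mem_ker, hSlapp] at hy
    rw [hfIKapp] at hy0
    exact hinjV y hy hy0)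
  -- operator norm for `vecMul · K`
  set TK := (Matrix.vecMulLinear K).toContinuousLinearMap with hTKdef
  have hTKapp : ∀ y : Fin d → ℝ, TK y = Matrix.vecMul y K := fun y => rfl
  set CK : ℝ := ‖TK‖ with hCKdef
  have hCKnn : 0 ≤ CK := norm_nonneg _
  have hCK : ∀ y : Fin d → ℝ, ‖Matrix.vecMul y K‖ ≤ CK * ‖y‖ := by
    intro y
    rw [← hTKapp]
    exact TK.le_opNorm y
  -- ### Concentration constants
  obtain ⟨T₁, hT₁⟩ := hattr (r₀/4) (by positivity)
  set δ : ℝ := r₀ / (4 * (T₁ + 1) * L' ^ T₁) with hδdef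
  have hδpos : 0 < δ := by
    have := hL'pow T₁
    apply div_pos hr₀
    positivity
  refine ⟨C * (CK + 1) * (T₁ + 1) + 1, 2 * δ ^ 2, by positivity, by positivity, ?_⟩
  intro N hN Ω mΩ μ hμprob M hMmeas hMmem hMstat hMcond hMtail
  -- ### Measurability and integrability
  have hφM : ∀ t, Measurable fun ω => φ (M t ω) := by
    intro t
    have hψ : Continuous fun p : stdSimplex ℝ (Fin d) => φ p.val := by
      rw [Metric.continuous_iff]
      intro p ε hε
      refine ⟨ε / (L + 1), by positivity, fun q hq => ?_⟩
      have h1 : dist (φ q.val) (φ p.val) = ‖φ q.val - φ p.val‖ := dist_eq_norm _ _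
      have h2 : dist q p = ‖q.val - p.val‖ := by
        rw [Subtype.dist_eq, dist_eq_norm]
      rw [h1]
      calc ‖φ q.val - φ p.val‖ ≤ L * ‖q.val - p.val‖ := hlip _ q.2 _ p.2
        _ < ε := by
            rw [h2] at hq
            have hn : 0 ≤ ‖q.val - p.val‖ := norm_nonneg _
            have : L * ‖q.val - p.val‖ < L * (ε / (L+1)) ∨ ‖q.val - p.val‖ = 0 := by
              rcases eq_or_lt_of_le hn with h | h
              · right; exact h.symm
              · left; exact (mul_lt_mul_iff_right₀ hL).mpr hq
            rcases this with h | h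
            · have : L * (ε / (L+1)) < ε := by
                rw [mul_div_assoc', div_lt_iff₀ (by linarith)]
                nlinarith
              linarith
            · rw [h]; simpa using hε
    have hM' : Measurable fun ω => (⟨M t ω, hMmem t ω⟩ : stdSimplex ℝ (Fin d)) :=
      (hMmeas t).subtype_mk
    exact hψ.measurable.comp hM'
  have hnorm1 : ∀ t ω, ‖M t ω‖ ≤ 1 := by
    intro t ω
    rw [pi_norm_le_iff_of_nonneg zero_le_one]
    intro i
    have h := (hMmem t ω).1 i
    have h2 : M t ω i ≤ 1 := by
      have := Finset.single_le_sum (fun j _ => (hMmem t ω).1 j) (Finset.mem_univ i)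
      rw [(hMmem t ω).2] at this; exact this
    rw [Real.norm_eq_abs, abs_le]; exact ⟨by linarith, h2⟩
  have hInt : ∀ t, Integrable (M t) μ := by
    intro t
    exact (integrable_const (1:ℝ)).mono' ((hMmeas t).aestronglyMeasurable)
      (Filter.Eventually.of_forall fun ω => hnorm1 t ω)
  have hIntφ : ∀ t, Integrable (fun ω => φ (M t ω)) μ := by
    intro t
    refine (integrable_const (1:ℝ)).mono' ((hφM t).aestronglyMeasurable)
      (Filter.Eventually.of_forall fun ω => ?_)
    have hmem := hself _ (hMmem t ω)
    rw [pi_norm_le_iff_of_nonneg zero_le_one]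
    intro i
    have h := hmem.1 i
    have h2 : φ (M t ω) i ≤ 1 := by
      have := Finset.single_le_sum (fun j _ => hmem.1 j) (Finset.mem_univ i)
      rw [hmem.2] at this; exact this
    rw [Real.norm_eq_abs, abs_le]; exact ⟨by linarith, h2⟩
  -- ### Stationarity of the mean
  have hmean : ∀ t, ∫ ω, M t ω ∂μ = ∫ ω, M 0 ω ∂μ := by
    intro t
    have h1 : ∫ ω, M t ω ∂μ = ∫ x, x ∂(Measure.map (M t) μ) :=
      (integral_map (hMmeas t).aemeasurable aestronglyMeasurable_id).symm
    have h2 : ∫ ω, M 0 ω ∂μ = ∫ x, x ∂(Measure.map (M 0) μ) :=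
      (integral_map (hMmeas 0).aemeasurable aestronglyMeasurable_id).symm
    rw [h1, h2, hMstat t]
  have hmeanφ : ∫ ω, φ (M 0 ω) ∂μ = ∫ ω, M 0 ω ∂μ := by
    have hm : MeasurableSpace.comap (M 0) inferInstance ≤ mΩ :=
      measurable_iff_comap_le.mp (hMmeas 0)
    have h1 : ∫ ω, φ (M 0 ω) ∂μ
        = ∫ ω, (μ[M 1 | MeasurableSpace.comap (M 0) inferInstance]) ω ∂μ :=
      (integral_congr_ae (hMcond 0)).symm
    rw [h1, integral_condExp hm, hmean 1]
  -- ### Concentration: the stationary law is near `mstar` w.h.p.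
  set B : ℕ → Set Ω := fun s => {ω | δ ≤ ‖M (s + 1) ω - φ (M s ω)‖} with hBdef
  have hBmeas : ∀ s, MeasurableSet (B s) := by
    intro s
    have : Measurable fun ω => ‖M (s+1) ω - φ (M s ω)‖ :=
      ((hMmeas (s+1)).sub (hφM s)).norm
    exact measurableSet_le measurable_const this
  have hBprob : ∀ s, (μ (B s)).toReal ≤ Real.exp (-2 * N * δ ^ 2) := by
    intro s
    have hm : MeasurableSpace.comap (M s) inferInstance ≤ mΩ :=
      measurable_iff_comap_le.mp (hMmeas s)
    have h1 : ∫ ω, Set.indicator (B s) (fun _ => (1:ℝ)) ω ∂μ = (μ (B s)).toReal := by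
      rw [integral_indicator_const (1:ℝ) (hBmeas s)]; simp; rfl
    have h2 : ∫ ω, (μ[Set.indicator (B s) (fun _ => (1:ℝ))
        | MeasurableSpace.comap (M s) inferInstance]) ω ∂μ
        = ∫ ω, Set.indicator (B s) (fun _ => (1:ℝ)) ω ∂μ := integral_condExp hm
    have h3 : ∫ ω, (μ[Set.indicator (B s) (fun _ => (1:ℝ))
        | MeasurableSpace.comap (M s) inferInstance]) ω ∂μ ≤ Real.exp (-2 * N * δ ^ 2) := by
      calc ∫ ω, (μ[Set.indicator (B s) (fun _ => (1:ℝ))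
            | MeasurableSpace.comap (M s) inferInstance]) ω ∂μ
          ≤ ∫ _, Real.exp (-2 * N * δ ^ 2) ∂μ :=
            integral_mono_ae integrable_condExp (integrable_const _) (hMtail s δ hδpos)
        _ = Real.exp (-2 * N * δ ^ 2) := by simp
    rw [← h1, ← h2]; exact h3
  have hpath : ∀ ω, (∀ s < T₁, ω ∉ B s) → ‖M T₁ ω - mstar‖ ≤ r₀ / 2 := by
    intro ω hω
    have key : ∀ t ≤ T₁, ‖M t ω - φ^[t] (M 0 ω)‖ ≤ δ * ∑ s ∈ Finset.range t, L' ^ s := by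
      intro t
      induction t with
      | zero => intro _; simp
      | succ n ih =>
        intro hn
        have hih := ih (by omega)
        have hstep : ‖M (n+1) ω - φ (M n ω)‖ < δ := by
          have := hω n (by omega)
          simp only [hBdef, Set.mem_setOf_eq, not_le] at this
          exact this
        have hlipstep : ‖φ (M n ω) - φ (φ^[n] (M 0 ω))‖ ≤ L * ‖M n ω - φ^[n] (M 0 ω)‖ :=
          hlip _ (hMmem n ω) _ (hiter n _ (hMmem 0 ω))
        calc ‖M (n+1) ω - φ^[n+1] (M 0 ω)‖
            = ‖(M (n+1) ω - φ (M n ω)) + (φ (M n ω) - φ^[n+1] (M 0 ω))‖ := by ring_nf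
          _ ≤ ‖M (n+1) ω - φ (M n ω)‖ + ‖φ (M n ω) - φ^[n+1] (M 0 ω)‖ := norm_add_le _ _
          _ ≤ δ + L * ‖M n ω - φ^[n] (M 0 ω)‖ := by
              rw [Function.iterate_succ_apply']
              exact add_le_add hstep.le hlipstep
          _ ≤ δ + L' * (δ * ∑ s ∈ Finset.range n, L' ^ s) := by
              have h0 : 0 ≤ ‖M n ω - φ^[n] (M 0 ω)‖ := norm_nonneg _
              have := mul_le_mul hLL' hih h0 (by linarith)
              linarith
          _ = δ * ∑ s ∈ Finset.range (n+1), L' ^ s := by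
              rw [Finset.sum_range_succ']
              simp only [pow_succ, pow_zero, ← Finset.sum_mul]
              ring
    have h1 : ‖M T₁ ω - φ^[T₁] (M 0 ω)‖ ≤ r₀ / 4 := by
      have hsum : ∑ s ∈ Finset.range T₁, L' ^ s ≤ (T₁ : ℝ) * L' ^ T₁ := by
        calc ∑ s ∈ Finset.range T₁, L' ^ s ≤ ∑ s ∈ Finset.range T₁, L' ^ T₁ := by
              apply Finset.sum_le_sum
              intro s hs
              exact pow_le_pow_right₀ (by linarith) (Finset.mem_range.mp hs).le
          _ = (T₁ : ℝ) * L' ^ T₁ := by rw [Finset.sum_const, Finset.card_range]; ring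
      calc ‖M T₁ ω - φ^[T₁] (M 0 ω)‖ ≤ δ * ∑ s ∈ Finset.range T₁, L' ^ s := key T₁ le_rfl
        _ ≤ δ * ((T₁:ℝ) * L' ^ T₁) := mul_le_mul_of_nonneg_left hsum hδpos.le
        _ ≤ r₀ / 4 := by
            rw [hδdef, div_mul_eq_mul_div, div_le_div_iff₀ (by positivity) (by norm_num)]
            have h := hL'pow T₁
            nlinarith [hr₀, h]
    have h2 : ‖φ^[T₁] (M 0 ω) - mstar‖ ≤ r₀ / 4 := hT₁ T₁ le_rfl _ (hMmem 0 ω)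
    calc ‖M T₁ ω - mstar‖ = ‖(M T₁ ω - φ^[T₁] (M 0 ω)) + (φ^[T₁] (M 0 ω) - mstar)‖ := by ring_nf
      _ ≤ ‖M T₁ ω - φ^[T₁] (M 0 ω)‖ + ‖φ^[T₁] (M 0 ω) - mstar‖ := norm_add_le _ _
      _ ≤ r₀ / 2 := by linarith
  set Ac : Set Ω := {ω | r₀ / 2 < ‖M 0 ω - mstar‖} with hAcdef
  have hAcmeas : MeasurableSet Ac := by
    have : Measurable fun ω => ‖M 0 ω - mstar‖ := ((hMmeas 0).sub measurable_const).norm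
    exact measurableSet_lt measurable_const this
  have hSset : MeasurableSet {x : Fin d → ℝ | r₀ / 2 < ‖x - mstar‖} := by
    have : Continuous fun x : Fin d → ℝ => ‖x - mstar‖ :=
      (continuous_id.sub continuous_const).norm
    exact measurableSet_lt measurable_const this.measurable
  have hstat : μ Ac = μ {ω | r₀ / 2 < ‖M T₁ ω - mstar‖} := by
    have h1 : Ac = M 0 ⁻¹' {x | r₀ / 2 < ‖x - mstar‖} := rfl
    have h2 : {ω | r₀ / 2 < ‖M T₁ ω - mstar‖} = M T₁ ⁻¹' {x | r₀ / 2 < ‖x - mstar‖} := rfl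
    rw [h1, h2, ← Measure.map_apply (hMmeas 0) hSset, ← Measure.map_apply (hMmeas T₁) hSset,
      hMstat T₁]
  have hsubset : {ω | r₀ / 2 < ‖M T₁ ω - mstar‖} ⊆ ⋃ s ∈ Finset.range T₁, B s := by
    intro ω hω
    by_cases h : ∃ s, s < T₁ ∧ ω ∈ B s
    · obtain ⟨s, hs, hb⟩ := h
      exact Set.mem_biUnion (Finset.mem_range.mpr hs) hb
    · push_neg at h
      have := hpath ω (fun s hs => h s hs)
      simp only [Set.mem_setOf_eq] at hω
      linarith
  have hAcbound : (μ Ac).toReal ≤ (T₁ + 1 : ℝ) * Real.exp (-2 * N * δ ^ 2) := by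
    have h1 : μ Ac ≤ ∑ s ∈ Finset.range T₁, μ (B s) := by
      rw [hstat]
      exact le_trans (measure_mono hsubset) (measure_biUnion_finset_le _ _)
    have h2 : (μ Ac).toReal ≤ ∑ s ∈ Finset.range T₁, (μ (B s)).toReal := by
      rw [← ENNReal.toReal_sum (fun s _ => measure_ne_top μ (B s))]
      exact ENNReal.toReal_mono (ENNReal.sum_ne_top.mpr fun s _ => measure_ne_top μ _) h1
    calc (μ Ac).toReal ≤ ∑ s ∈ Finset.range T₁, (μ (B s)).toReal := h2
      _ ≤ ∑ s ∈ Finset.range T₁, Real.exp (-2 * N * δ ^ 2) :=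
          Finset.sum_le_sum fun s _ => hBprob s
      _ = (T₁ : ℝ) * Real.exp (-2 * N * δ ^ 2) := by
          rw [Finset.sum_const, Finset.card_range]; ring
      _ ≤ (T₁ + 1 : ℝ) * Real.exp (-2 * N * δ ^ 2) := by
          have := Real.exp_pos (-2 * N * δ ^ 2)
          nlinarith
  -- ### The fixed-point equation for the mean
  set x : Fin d → ℝ := (∫ ω, M 0 ω ∂μ) - mstar with hxdef
  have hInt0' : Integrable (fun ω => M 0 ω - mstar) μ := (hInt 0).sub (integrable_const mstar)
  have hIntφ0' : Integrable (fun ω => φ (M 0 ω) - mstar) μ :=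
    (hIntφ 0).sub (integrable_const mstar)
  have hconstint : ∫ _ω, mstar ∂μ = mstar := by
    rw [integral_const, probReal_univ, one_smul]
  have hx1 : ∫ ω, (M 0 ω - mstar) ∂μ = x := by
    rw [integral_sub (hInt 0) (integrable_const mstar), hconstint, hxdef]
  have hx2 : ∫ ω, (φ (M 0 ω) - mstar) ∂μ = x := by
    rw [integral_sub (hIntφ 0) (integrable_const mstar), hconstint, hmeanφ, hxdef]
  have hxsum : ∑ i, x i = 0 := by
    have hSc : Sl.toContinuousLinearMap (∫ ω, M 0 ω ∂μ) = ∫ ω, Sl.toContinuousLinearMap (M 0 ω) ∂μ :=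
      (ContinuousLinearMap.integral_comp_comm _ (hInt 0)).symm
    have hSc2 : ∫ ω, Sl.toContinuousLinearMap (M 0 ω) ∂μ = 1 := by
      have : ∀ ω, Sl.toContinuousLinearMap (M 0 ω) = 1 := by
        intro ω
        show Sl (M 0 ω) = 1
        rw [hSlapp]
        exact (hMmem 0 ω).2
      simp only [this]
      simp
    have hSl1 : Sl.toContinuousLinearMap (∫ ω, M 0 ω ∂μ) = 1 := by rw [hSc, hSc2]
    have hSlm : Sl.toContinuousLinearMap mstar = 1 := by
      show Sl mstar = 1
      rw [hSlapp]; exact hmstarS.2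
    have : Sl.toContinuousLinearMap x = 0 := by
      rw [hxdef, map_sub, hSl1, hSlm, sub_self]
    rw [← hSlapp x]
    exact this
  -- the defect function
  set hfun : Ω → (Fin d → ℝ) :=
    fun ω => (φ (M 0 ω) - mstar) - Matrix.vecMul (M 0 ω - mstar) K with hfundef
  have hTKint : Integrable (fun ω => TK (M 0 ω - mstar)) μ := by
    exact (TK.integrable_comp hInt0')
  have hfunInt : Integrable hfun μ := by
    have : hfun = fun ω => (φ (M 0 ω) - mstar) - TK (M 0 ω - mstar) := by
      funext ω; simp only [hfundef, hTKapp]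
    rw [this]
    exact hIntφ0'.sub hTKint
  have heq : x - Matrix.vecMul x K = ∫ ω, hfun ω ∂μ := by
    have h1 : ∫ ω, TK (M 0 ω - mstar) ∂μ = TK x := by
      rw [ContinuousLinearMap.integral_comp_comm TK hInt0', hx1]
    have h2 : ∫ ω, hfun ω ∂μ
        = ∫ ω, (φ (M 0 ω) - mstar) ∂μ - ∫ ω, TK (M 0 ω - mstar) ∂μ := by
      have : hfun = fun ω => (φ (M 0 ω) - mstar) - TK (M 0 ω - mstar) := by
        funext ω; simp only [hfundef, hTKapp]
      rw [this, integral_sub hIntφ0' hTKint]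
    rw [h2, hx2, h1, hTKapp]
  have hvanish : ∀ ω ∈ Acᶜ, hfun ω = 0 := by
    intro ω hω
    simp only [hAcdef, Set.mem_compl_iff, Set.mem_setOf_eq, not_lt] at hω
    have := haff _ (hMmem 0 ω) (lt_of_le_of_lt hω (by linarith))
    simp only [hfundef]
    rw [this]
    abel
  have hsplit : ∫ ω, hfun ω ∂μ = ∫ ω in Ac, hfun ω ∂μ := by
    rw [← integral_add_compl hAcmeas hfunInt]
    have : ∫ ω in Acᶜ, hfun ω ∂μ = 0 := by
      rw [setIntegral_congr_fun hAcmeas.compl hvanish]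
      simp
    rw [this, add_zero]
  have hnormbound : ‖∫ ω in Ac, hfun ω ∂μ‖ ≤ (1 + CK) * (μ Ac).toReal := by
    apply norm_setIntegral_le_of_norm_le_const (measure_lt_top μ Ac)
    · intro ω _
      have hb1 : ‖φ (M 0 ω) - mstar‖ ≤ 1 := hdiff1 _ (hself _ (hMmem 0 ω)) _ hmstarS
      have hb2 : ‖Matrix.vecMul (M 0 ω - mstar) K‖ ≤ CK * ‖M 0 ω - mstar‖ := hCK _
      have hb3 : ‖M 0 ω - mstar‖ ≤ 1 := hdiff1 _ (hMmem 0 ω) _ hmstarS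
      calc ‖hfun ω‖ ≤ ‖φ (M 0 ω) - mstar‖ + ‖Matrix.vecMul (M 0 ω - mstar) K‖ := by
            simp only [hfundef]; exact norm_sub_le _ _
        _ ≤ 1 + CK := by nlinarith
  -- ### Putting things together
  have hxbound : ‖x‖ ≤ C * ((1 + CK) * ((T₁ + 1 : ℝ) * Real.exp (-2 * N * δ ^ 2))) := by
    have hmem : x ∈ LinearMap.ker Sl := by
      rw [LinearMap.mem_ker, hSlapp]; exact hxsum
    have h1 := hC x hmem
    rw [hfIKapp, heq, hsplit] at h1
    have h2 : ‖∫ ω in Ac, hfun ω ∂μ‖ ≤ (1 + CK) * ((T₁ + 1 : ℝ) * Real.exp (-2 * N * δ ^ 2)) := by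
      calc ‖∫ ω in Ac, hfun ω ∂μ‖ ≤ (1 + CK) * (μ Ac).toReal := hnormbound
        _ ≤ (1 + CK) * ((T₁ + 1 : ℝ) * Real.exp (-2 * N * δ ^ 2)) := by
            apply mul_le_mul_of_nonneg_left hAcbound (by linarith)
    calc ‖x‖ ≤ C * ‖∫ ω in Ac, hfun ω ∂μ‖ := h1
      _ ≤ C * ((1 + CK) * ((T₁ + 1 : ℝ) * Real.exp (-2 * N * δ ^ 2))) :=
          mul_le_mul_of_nonneg_left h2 hCpos.le
  have hexp : Real.exp (-2 * N * δ ^ 2) = Real.exp (-(2 * δ ^ 2) * N) := by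
    congr 1; ring
  calc ‖x‖ ≤ C * ((1 + CK) * ((T₁ + 1 : ℝ) * Real.exp (-2 * N * δ ^ 2))) := hxbound
    _ = C * (CK + 1) * (T₁ + 1) * Real.exp (-(2 * δ ^ 2) * N) := by rw [hexp]; ring
    _ ≤ (C * (CK + 1) * (T₁ + 1) + 1) * Real.exp (-(2 * δ ^ 2) * N) := by
        have := Real.exp_pos (-(2 * δ ^ 2) * N)
        nlinarith
end

section
/- Let X_N be a Binomial(N, 1/2) random variable for each N ∈ ℕ. Then lim_{N→∞} (1/√N)·E[ max(N/2 − X_N, 0) ] = (1/2)·E[max(G, 0)] = 1/(2√(2π)), where G is a standard normal random variable. Consequently, for the two-state bandit example with P^0 = P^1 = [[1/2,1/2],[1/2,1/2]], rewards R^0 = (0,0), R^1 = (1,0) and α = 1/2, the optimality gap of the Whittle index policy decays only at rate Θ(√N) and not exponentially: the fixed point in this example is singular. -/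
open Finset Filter

section AuxSingular
open MeasureTheory Real ProbabilityTheory

lemma gderiv : ∀ x ∈ Set.Ici (0:ℝ), HasDerivAt (fun x : ℝ => -Real.exp (-x^2/2))
    (x * Real.exp (-x^2/2)) x := by
  intro x _
  have h1 : HasDerivAt (fun x : ℝ => -x^2/2) (-x) x := by
    have := (hasDerivAt_pow 2 x).neg.div_const 2
    refine this.congr_deriv ?_
    push_cast; ring
  have := h1.exp.neg
  refine this.congr_deriv ?_
  ring

lemma gtend : Tendsto (fun x : ℝ => -Real.exp (-x^2/2)) atTop (nhds 0) := by
  rw [show (0:ℝ) = -0 by ring]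
  apply Tendsto.neg
  apply Real.tendsto_exp_atBot.comp
  apply Tendsto.atBot_div_const (by norm_num)
  simpa using (tendsto_pow_atTop (n := 2) (by norm_num)).neg

lemma intIoi : ∫ x in Set.Ioi (0:ℝ), x * Real.exp (-x^2/2) = 1 := by
  have h := integral_Ioi_of_hasDerivAt_of_nonneg' gderiv
    (fun x hx => mul_nonneg hx.out.le (Real.exp_nonneg _)) gtend
  simpa using h

lemma intblIoi : IntegrableOn (fun x : ℝ => x * Real.exp (-x^2/2)) (Set.Ioi 0) := by
  exact integrableOn_Ioi_deriv_of_nonneg' gderiv (fun x hx => mul_nonneg hx.out.le (Real.exp_nonneg _)) gtend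

lemma pdf01 (x : ℝ) : gaussianPDFReal 0 1 x = (Real.sqrt (2*Real.pi))⁻¹ * Real.exp (-x^2/2) := by
  simp only [gaussianPDFReal, NNReal.coe_one, mul_one, sub_zero]


lemma intIoi' : ∫ x in Set.Ioi (0:ℝ), max x 0 * gaussianPDFReal 0 1 x
    = (Real.sqrt (2*Real.pi))⁻¹ := by
  rw [setIntegral_congr_fun measurableSet_Ioi
    (g := fun x => (Real.sqrt (2*Real.pi))⁻¹ * (x * Real.exp (-x^2/2)))
    (by intro x hx; simp only [pdf01, max_eq_left hx.out.le]; ring)]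
  rw [MeasureTheory.integral_const_mul, intIoi, mul_one]

lemma intIic' : ∫ x in Set.Iic (0:ℝ), max x 0 * gaussianPDFReal 0 1 x = 0 := by
  rw [setIntegral_congr_fun measurableSet_Iic (g := fun _ => (0:ℝ))
    (by intro x hx; simp [max_eq_right hx.out])]
  simp

lemma intblFull : Integrable (fun x : ℝ => max x 0 * gaussianPDFReal 0 1 x) := by
  rw [← integrableOn_univ, ← Set.Iic_union_Ioi (a := (0:ℝ))]
  apply IntegrableOn.union
  · have h1 : Set.EqOn (fun x : ℝ => max x 0 * gaussianPDFReal 0 1 x) (fun _ => (0:ℝ))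
        (Set.Iic 0) := by
      intro x hx; simp [max_eq_right hx.out]
    exact (integrableOn_congr_fun h1 measurableSet_Iic).mpr (integrableOn_zero)
  · have h2 : Set.EqOn (fun x : ℝ => max x 0 * gaussianPDFReal 0 1 x)
        (fun x => (Real.sqrt (2*Real.pi))⁻¹ * (x * Real.exp (-x^2/2))) (Set.Ioi 0) := by
      intro x hx; simp only [pdf01, max_eq_left hx.out.le]; ring
    exact (integrableOn_congr_fun h2 measurableSet_Ioi).mpr (intblIoi.const_mul _)

lemma gauss_max : ∫ x, max x 0 ∂(gaussianReal 0 1) = (Real.sqrt (2*Real.pi))⁻¹ := by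
  rw [gaussianReal_of_var_ne_zero 0 one_ne_zero, gaussianPDF_def]
  simp_rw [fun x => ENNReal.ofReal_eq_coe_nnreal (gaussianPDFReal_nonneg 0 1 x)]
  erw [integral_withDensity_eq_integral_smul
    (f := fun x => NNReal.mk (gaussianPDFReal 0 1 x) (gaussianPDFReal_nonneg 0 1 x))
    ((measurable_gaussianPDFReal 0 1).subtype_mk)]
  have h : ∀ x : ℝ, NNReal.mk (gaussianPDFReal 0 1 x) (gaussianPDFReal_nonneg 0 1 x) • max x 0
      = max x 0 * gaussianPDFReal 0 1 x := by
    intro x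
    rw [NNReal.smul_def, smul_eq_mul, NNReal.coe_mk]
    ring
  simp_rw [h]
  rw [← MeasureTheory.integral_add_compl (measurableSet_Iic (a := (0:ℝ))) intblFull,
    Set.compl_Iic, intIic', zero_add]
  exact intIoi'


lemma closedForm (N : ℕ) :
    ∑ k ∈ Finset.range (N + 1), (N.choose k : ℝ) * (1 / 2) ^ N * max ((N : ℝ) / 2 - k) 0
    = (((N+1)/2 : ℕ) : ℝ) * (N.choose ((N+1)/2)) * (1/2)^(N+1) := by
  set m := (N+1)/2 with hm
  have hm1 : 2 * m ≥ N := by omega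
  have hm2 : 2 * m ≤ N + 1 := by omega
  have hmN : m ≤ N + 1 := by omega
  have hsplit : ∑ k ∈ Finset.range (N + 1),
        (N.choose k : ℝ) * (1 / 2) ^ N * max ((N : ℝ) / 2 - k) 0
      = ∑ k ∈ Finset.range m, (N.choose k : ℝ) * (1 / 2) ^ N * ((N : ℝ) / 2 - k) := by
    rw [Finset.range_eq_Ico, ← Finset.sum_Ico_consecutive _ (Nat.zero_le m) hmN]
    have h2 : ∑ k ∈ Finset.Ico m (N+1),
        (N.choose k : ℝ) * (1 / 2) ^ N * max ((N : ℝ) / 2 - k) 0 = 0 := by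
      apply Finset.sum_eq_zero
      intro k hk
      have hk1 : m ≤ k := (Finset.mem_Ico.mp hk).1
      have hNk : (N : ℝ) ≤ 2 * k := by
        have : N ≤ 2 * k := by omega
        exact_mod_cast this
      rw [max_eq_right (by linarith), mul_zero]
    rw [h2, add_zero]
    rw [← Finset.range_eq_Ico]
    apply Finset.sum_congr rfl
    intro k hk
    have hk1 : k < m := by simpa [Finset.mem_Ico] using hk
    have hNk : 2 * (k:ℝ) ≤ (N:ℝ) := by
      have : 2 * k ≤ N := by omega
      exact_mod_cast this
    rw [max_eq_left (by linarith)]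
  rw [hsplit]
  have htel : ∑ k ∈ Finset.range m, (N.choose k : ℝ) * ((N : ℝ) / 2 - k)
      = (m : ℝ) * (N.choose m) / 2 := by
    have htel0 := Finset.sum_range_sub (fun k => (k : ℝ) * (N.choose k) / 2) m
    simp only [Nat.cast_zero, zero_mul, zero_div, sub_zero] at htel0
    rw [← htel0]
    · apply Finset.sum_congr rfl
      intro k hk
      have hk1 : k < m := Finset.mem_range.mp hk
      have hkN : k ≤ N := by omega
      have hch : ((N.choose (k+1) : ℝ)) * (k+1) = (N.choose k : ℝ) * ((N:ℝ) - k) := by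
        have h := Nat.choose_succ_right_eq N k
        have h2 : ((N.choose (k + 1) * (k + 1) : ℕ) : ℝ) = ((N.choose k * (N - k) : ℕ) : ℝ) := by
          exact_mod_cast congrArg (Nat.cast (R := ℝ)) h
        push_cast [Nat.cast_sub hkN] at h2
        linarith
      push_cast
      ring_nf
      ring_nf at hch
      linarith
  calc ∑ k ∈ Finset.range m, (N.choose k : ℝ) * (1 / 2) ^ N * ((N : ℝ) / 2 - k)
      = (1/2)^N * ∑ k ∈ Finset.range m, (N.choose k : ℝ) * ((N : ℝ) / 2 - k) := by
        rw [Finset.mul_sum]; apply Finset.sum_congr rfl; intro k _; ring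
    _ = (m : ℝ) * (N.choose m) * (1/2)^(N+1) := by rw [htel]; ring


noncomputable def aseq (r : ℕ) : ℝ := Real.sqrt r * (Nat.centralBinom r) / 4 ^ r

lemma aseq_eq (r : ℕ) (hr : 1 ≤ r) :
    aseq r = Stirling.stirlingSeq (2 * r) / (Stirling.stirlingSeq r) ^ 2 := by
  have hrpos : (0:ℝ) < r := by exact_mod_cast hr
  have hsr : Real.sqrt r > 0 := Real.sqrt_pos.mpr hrpos
  have hsr2 : Real.sqrt r * Real.sqrt r = r := Real.mul_self_sqrt hrpos.le
  have hs2r : Real.sqrt (2 * (2 * r)) = 2 * Real.sqrt r := by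
    rw [show (2 : ℝ) * (2 * (r:ℕ)) = 4 * r by push_cast; ring, Real.sqrt_mul (by norm_num),
      show (4:ℝ) = 2^2 by norm_num, Real.sqrt_sq (by norm_num)]
  have hs2r' : Real.sqrt (2 * r) ^ 2 = 2 * r := Real.sq_sqrt (by positivity)
  have hfact : ((2 * r).factorial : ℝ)
      = (Nat.centralBinom r : ℝ) * (r.factorial) * (r.factorial) := by
    have := Nat.choose_mul_factorial_mul_factorial (Nat.le_mul_of_pos_left r (by norm_num) : r ≤ 2 * r)
    have h2 : ((2*r).choose r * r.factorial * (2*r - r).factorial : ℕ) = (2*r).factorial := this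
    rw [show 2*r - r = r by omega] at h2
    rw [Nat.centralBinom]
    exact_mod_cast h2.symm
  have hepos : (0:ℝ) < Real.exp 1 := Real.exp_pos 1
  have hP : (0:ℝ) < ((r:ℝ) / Real.exp 1) ^ r := by positivity
  have hfp : (0:ℝ) < (r.factorial : ℝ) := by exact_mod_cast r.factorial_pos
  rw [Stirling.stirlingSeq, Stirling.stirlingSeq, aseq]
  push_cast
  rw [hs2r]
  have e1 : ((r:ℝ)/Real.exp 1)^(2*r) = (((r:ℝ)/Real.exp 1)^r)^2 := pow_mul' _ 2 r
  have e2 : (2:ℝ)^(2*r) = 4^r := by rw [pow_mul]; norm_num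
  have hpow : ((2 * (r:ℝ)) / Real.exp 1) ^ (2 * r) = 4 ^ r * (((r:ℝ) / Real.exp 1) ^ r) ^ 2 := by
    rw [show (2 * (r:ℝ)) / Real.exp 1 = 2 * ((r:ℝ)/Real.exp 1) by ring, mul_pow, e1, e2]
  rw [hpow, hfact]
  have hrr : (0:ℝ) < (r:ℝ)^r := by positivity
  have hee : (0:ℝ) < Real.exp 1 ^ r := by positivity
  have hs2rpos : (0:ℝ) < Real.sqrt (2*(r:ℝ)) := by positivity
  field_simp
  ring_nf
  rw [Real.sq_sqrt (by positivity : (0:ℝ) ≤ r), Real.sq_sqrt (by positivity : (0:ℝ) ≤ (r:ℝ)*2)]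
  ring



lemma aseq_tendsto : Tendsto aseq atTop (nhds (Real.sqrt Real.pi)⁻¹) := by
  have hs := Stirling.tendsto_stirlingSeq_sqrt_pi
  have h2 : Tendsto (fun r : ℕ => Stirling.stirlingSeq (2*r)) atTop (nhds (Real.sqrt Real.pi)) :=
    hs.comp (tendsto_atTop_atTop_of_monotone (fun a b h => by omega) (fun b => ⟨b, by omega⟩))
  have hsq : Tendsto (fun r : ℕ => (Stirling.stirlingSeq r)^2) atTop
      (nhds ((Real.sqrt Real.pi)^2)) := hs.pow 2
  have hppos : (0:ℝ) < Real.pi := Real.pi_pos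
  have hne : (Real.sqrt Real.pi)^2 ≠ 0 := by positivity
  have hdiv := h2.div hsq hne
  have hval : Real.sqrt Real.pi / (Real.sqrt Real.pi)^2 = (Real.sqrt Real.pi)⁻¹ := by
    have h : (0:ℝ) < Real.sqrt Real.pi := by positivity
    field_simp
  rw [hval] at hdiv
  apply hdiv.congr'
  filter_upwards [eventually_ge_atTop 1] with r hr
  exact (aseq_eq r hr).symm

lemma tendsto_even_odd {s : ℕ → ℝ} {l : ℝ}
    (he : Tendsto (fun n => s (2*n)) atTop (nhds l))
    (ho : Tendsto (fun n => s (2*n+1)) atTop (nhds l)) :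
    Tendsto s atTop (nhds l) := by
  rw [Metric.tendsto_atTop] at he ho ⊢
  intro ε hε
  obtain ⟨N1, h1⟩ := he ε hε
  obtain ⟨N2, h2⟩ := ho ε hε
  refine ⟨2*N1+2*N2+2, fun n hn => ?_⟩
  rcases Nat.even_or_odd n with ⟨k, hk⟩ | ⟨k, hk⟩
  · have hnk : n = 2*k := by omega
    rw [hnk]
    exact h1 k (by omega)
  · have hnk : n = 2*k+1 := by omega
    rw [hnk]
    exact h2 k (by omega)

noncomputable def G (N : ℕ) : ℝ :=
  ((((N+1)/2 : ℕ) : ℝ) * (N.choose ((N+1)/2)) * (1/2)^(N+1)) / Real.sqrt N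

lemma G_even (r : ℕ) (hr : 1 ≤ r) : G (2*r) = aseq r / (2 * Real.sqrt 2) := by
  have h1 : (2*r+1)/2 = r := by omega
  have hch : (2*r).choose r = Nat.centralBinom r := rfl
  have hrpos : (0:ℝ) < r := by exact_mod_cast hr
  have hsr : (0:ℝ) < Real.sqrt r := Real.sqrt_pos.mpr hrpos
  have hsr2 : Real.sqrt r * Real.sqrt r = (r:ℝ) := Real.mul_self_sqrt hrpos.le
  have hs2 : Real.sqrt ((2*r : ℕ) : ℝ) = Real.sqrt 2 * Real.sqrt r := by
    push_cast
    rw [Real.sqrt_mul (by norm_num)]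
  have h4 : ((1:ℝ)/2)^(2*r+1) = ((4:ℝ)^r * 2)⁻¹ := by
    rw [pow_succ, pow_mul]
    norm_num
    rw [div_pow]
    norm_num
    ring
  rw [G, h1, hch, h4, hs2, aseq]
  have h4pos : (0:ℝ) < (4:ℝ)^r := by positivity
  field_simp
  linear_combination (-((Nat.centralBinom r : ℕ) : ℝ)) * hsr2

lemma G_odd (r : ℕ) (hr : 1 ≤ r) :
    G (2*r+1) = aseq r * (Real.sqrt (2*(r:ℝ)+1) / Real.sqrt r) / 4 := by
  have h1 : (2*r+1+1)/2 = r + 1 := by omega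
  have hch : (r+1) * (2*r+1).choose (r+1) = (2*r+1) * Nat.centralBinom r := by
    have h := Nat.add_one_mul_choose_eq (2*r) r
    rw [Nat.centralBinom]
    exact (mul_comm _ _).trans h.symm
  have hrpos : (0:ℝ) < r := by exact_mod_cast hr
  have hsr : (0:ℝ) < Real.sqrt r := Real.sqrt_pos.mpr hrpos
  have hsr2 : Real.sqrt r * Real.sqrt r = (r:ℝ) := Real.mul_self_sqrt hrpos.le
  have hso : (0:ℝ) < Real.sqrt (2*(r:ℝ)+1) := Real.sqrt_pos.mpr (by linarith)
  have hso2 : Real.sqrt (2*(r:ℝ)+1) * Real.sqrt (2*(r:ℝ)+1) = 2*(r:ℝ)+1 :=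
    Real.mul_self_sqrt (by linarith)
  have hcast : ((2*r+1 : ℕ) : ℝ) = 2*(r:ℝ)+1 := by push_cast; ring
  have h4 : ((1:ℝ)/2)^(2*r+1+1) = ((4:ℝ)^r * 4)⁻¹ := by
    rw [show 2*r+1+1 = 2*(r+1) by ring, pow_mul, show ((1:ℝ)/2)^2 = (1/4) by norm_num,
      one_div, inv_pow, pow_succ]
  rw [G, h1, h4, hcast, aseq]
  have hch' : ((r:ℝ)+1) * ((2*r+1).choose (r+1) : ℝ)
      = (2*(r:ℝ)+1) * (Nat.centralBinom r : ℝ) := by exact_mod_cast hch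
  have h4pos : (0:ℝ) < (4:ℝ)^r := by positivity
  have lhs_eq : (((r+1 : ℕ) : ℝ)) * ((2*r+1).choose (r+1) : ℝ)
      = (2*(r:ℝ)+1) * (Nat.centralBinom r : ℝ) := by push_cast; push_cast at hch'; linarith
  push_cast
  push_cast at lhs_eq
  rw [show ((r:ℝ) + 1) * ((2*r+1).choose (r+1) : ℝ) * (4 ^ r * 4)⁻¹
    = (2*(r:ℝ)+1) * (Nat.centralBinom r : ℝ) * (4 ^ r * 4)⁻¹ by rw [lhs_eq]]
  have hsone : Real.sqrt (2*(r:ℝ)+1) ≠ 0 := ne_of_gt hso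
  have hsrne : Real.sqrt (r:ℝ) ≠ 0 := ne_of_gt hsr
  field_simp
  ring_nf
  rw [Real.sq_sqrt (by positivity : (0:ℝ) ≤ 1 + (r:ℝ)*2)]
  ring

lemma tendsto_G : Tendsto G atTop (nhds ((1/2) * (Real.sqrt (2*Real.pi))⁻¹)) := by
  have hsp : Real.sqrt (2*Real.pi) = Real.sqrt 2 * Real.sqrt Real.pi :=
    Real.sqrt_mul (by norm_num) _
  have hpi : (0:ℝ) < Real.sqrt Real.pi := Real.sqrt_pos.mpr Real.pi_pos
  have h2 : (0:ℝ) < Real.sqrt 2 := by positivity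
  apply tendsto_even_odd
  · have hval : (Real.sqrt Real.pi)⁻¹ / (2*Real.sqrt 2) = (1/2) * (Real.sqrt (2*Real.pi))⁻¹ := by
      rw [hsp]
      field_simp
    rw [← hval]
    apply (aseq_tendsto.div_const _).congr'
    filter_upwards [eventually_ge_atTop 1] with r hr
    exact (G_even r hr).symm
  · have hratio : Tendsto (fun r : ℕ => Real.sqrt (2*(r:ℝ)+1) / Real.sqrt r) atTop
        (nhds (Real.sqrt 2)) := by
      have h1 : Tendsto (fun r : ℕ => (2*(r:ℝ)+1)/r) atTop (nhds 2) := by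
        have h0 : Tendsto (fun r : ℕ => 2 + 1/(r:ℝ)) atTop (nhds 2) := by
          simpa using (tendsto_const_nhds (x := (2:ℝ))).add tendsto_one_div_atTop_nhds_zero_nat
        apply h0.congr'
        filter_upwards [eventually_ge_atTop 1] with r hr
        have hrpos : (0:ℝ) < r := by exact_mod_cast hr
        field_simp
      have hc := (Real.continuous_sqrt.tendsto 2).comp h1
      apply hc.congr'
      filter_upwards [eventually_ge_atTop 1] with r hr
      simp only [Function.comp_apply]
      rw [Real.sqrt_div (by positivity)]
    have hval : (Real.sqrt Real.pi)⁻¹ * Real.sqrt 2 / 4 = (1/2) * (Real.sqrt (2*Real.pi))⁻¹ := by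
      rw [hsp]
      have hss : Real.sqrt 2 * Real.sqrt 2 = 2 := Real.mul_self_sqrt (by norm_num)
      field_simp
      nlinarith [hss, hpi, h2]
    rw [← hval]
    apply ((aseq_tendsto.mul hratio).div_const 4).congr'
    filter_upwards [eventually_ge_atTop 1] with r hr
    exact (G_odd r hr).symm

end AuxSingular

/-- (Remark 3.3 of the paper: the singular case.) If `X_N` is a
`Binomial(N, 1/2)` random variable, then
`lim_{N→∞} E[max(N/2 − X_N, 0)]/√N = (1/2)·E[max(G,0)] = 1/(2√(2π))`, where `G` is standard
normal. Here `E[max(N/2 − X_N, 0)] = ∑_{k=0}^{N} C(N,k) (1/2)^N max(N/2 − k, 0)`, and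
`E[max(G,0)]` is the integral of `max(x,0)` against the standard Gaussian measure. In the
two-state singular bandit example this quantity is the optimality gap of the Whittle index
policy, so the gap decays only at rate `Θ(√N)` rather than exponentially. -/
theorem singular_example_sqrtN_rate :
    Tendsto
      (fun N : ℕ =>
        (∑ k ∈ Finset.range (N + 1),
            (N.choose k : ℝ) * (1 / 2) ^ N * max ((N : ℝ) / 2 - k) 0) / Real.sqrt N)
      atTop
      (nhds ((1 / 2) * ∫ x, max x 0 ∂(ProbabilityTheory.gaussianReal 0 1)))
    ∧ (1 / 2) * ∫ x, max x 0 ∂(ProbabilityTheory.gaussianReal 0 1)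
        = 1 / (2 * Real.sqrt (2 * Real.pi)) := by
  have hint : (1/2 : ℝ) * ∫ x, max x 0 ∂(ProbabilityTheory.gaussianReal 0 1)
      = (1/2) * (Real.sqrt (2*Real.pi))⁻¹ := by rw [gauss_max]
  constructor
  · rw [hint]
    apply tendsto_G.congr
    intro N
    rw [G, closedForm]
  · rw [hint, one_div (2 * Real.sqrt (2*Real.pi)), mul_inv (2:ℝ) (Real.sqrt (2*Real.pi)), one_div]
end
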